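/- arXiv:math/0511518 — 5 statements merged into one kernel-verified Lean document; each statement's English description precedes it below -/
import Mathlib

section
/- Let B⊂[a,b] be a closed set with a,b∈B, and let f:[a,b]→ℝ be continuous. If the Lebesgue measure of f(B) is zero, then V(f,[a,b]) = Σ_{i∈I} V(f,[c_i,d_i]), where (c_i,d_i), i∈I⊂ℕ, are all the intervals contiguous to B in [a,b]. -/
open Set MeasureTheory
open scoped ENNReal NNReal

/-- The real-valued variation function `v_f(x) = V(f,[a,x])`. -/
noncomputable def vfn {X : Type*} [NormedAddCommGroup X] (f : ℝ → X) (a x : ℝ) : ℝ :=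
  (eVariationOn f (Set.Icc a x)).toReal

/-- The fractional variation `V_α(g, K)`: the supremum of sums
`Σ |g(b_i) - g(a_i)|^α` over finite collections of non-overlapping intervals
`[a_i, b_i]` with endpoints in `K`. -/
noncomputable def fracVar (α : ℝ) (g : ℝ → ℝ) (K : Set ℝ) : ℝ≥0∞ :=
  ⨆ (m : ℕ) (p : Fin m → ℝ × ℝ)
    (_ : ∀ i, (p i).1 ∈ K ∧ (p i).2 ∈ K ∧ (p i).1 ≤ (p i).2)
    (_ : ∀ i j, i < j → (p i).2 ≤ (p j).1),
    ∑ i, ENNReal.ofReal (|g (p i).2 - g (p i).1| ^ α)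

/-- `g` is twice differentiable on `[a,b]` (unilateral derivatives at the endpoints). -/
def TwiceDiffOn {X : Type*} [NormedAddCommGroup X] [NormedSpace ℝ X]
    (g : ℝ → X) (a b : ℝ) : Prop :=
  ∃ g' g'' : ℝ → X,
    (∀ x ∈ Set.Icc a b, HasDerivWithinAt g (g' x) (Set.Icc a b) x) ∧
    (∀ x ∈ Set.Icc a b, HasDerivWithinAt g' (g'' x) (Set.Icc a b) x)

/-- `f` restricted to `[c,d]` admits an arc-length parametrization which is
twice differentiable: `f` has bounded variation on `[c,d]` and there is a twice
differentiable `g` on `[0, V(f,[c,d])]` with `g ∘ v_f = f` on `[c,d]`. -/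
def HasC2ArcLengthParam {X : Type*} [NormedAddCommGroup X] [NormedSpace ℝ X]
    (f : ℝ → X) (c d : ℝ) : Prop :=
  BoundedVariationOn f (Set.Icc c d) ∧
  ∃ g : ℝ → X, TwiceDiffOn g 0 (vfn f c d) ∧ ∀ x ∈ Set.Icc c d, g (vfn f c x) = f x

/-- The set `K_f` of points `x ∈ [a,b]` such that there is no open interval `U ∋ x`
such that `f` restricted to `closure U ∩ [a,b]` is either constant or admits a twice
differentiable arc-length parametrization. -/
def Kset {X : Type*} [NormedAddCommGroup X] [NormedSpace ℝ X]
    (f : ℝ → X) (a b : ℝ) : Set ℝ :=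
  {x : ℝ | x ∈ Set.Icc a b ∧ ¬ ∃ c d : ℝ, c < x ∧ x < d ∧
    ((∀ y ∈ Set.Icc (max c a) (min d b), ∀ z ∈ Set.Icc (max c a) (min d b), f y = f z) ∨
     HasC2ArcLengthParam f (max c a) (min d b))}

/-- `f : [a,b] → X` is `VBG_{1/2}`: `f` has bounded variation and `K_f` is a countable
union of closed sets `A m` with `V_{1/2}(v_f, A m) < ∞`. -/
def VBGHalf {X : Type*} [NormedAddCommGroup X] [NormedSpace ℝ X]
    (f : ℝ → X) (a b : ℝ) : Prop :=
  BoundedVariationOn f (Set.Icc a b) ∧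
  ∃ A : ℕ → Set ℝ,
    (∀ m, IsClosed (A m) ∧ A m ⊆ Set.Icc a b ∧ fracVar (1/2) (vfn f a) (A m) < ⊤) ∧
    Kset f a b = ⋃ m, A m

/-- `f` is Lebesgue equivalent to `g` on `[a,b]`: `g = f ∘ h` for some homeomorphism
`h` of `[a,b]` onto itself. -/
def LebEquiv {X : Type*} [NormedAddCommGroup X] [NormedSpace ℝ X]
    (f g : ℝ → X) (a b : ℝ) : Prop :=
  ∃ h : ℝ → ℝ, ContinuousOn h (Set.Icc a b) ∧
    Set.BijOn h (Set.Icc a b) (Set.Icc a b) ∧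
    ∀ x ∈ Set.Icc a b, g x = f (h x)

/-- `φ` is pointwise Lipschitz on `s`: at every `x ∈ s` the difference quotients of
`φ` are bounded near `x`. -/
def PtwiseLipschitzOn {X : Type*} [NormedAddCommGroup X]
    (φ : ℝ → X) (s : Set ℝ) : Prop :=
  ∀ x ∈ s, ∃ C : ℝ, ∃ δ > 0, ∀ y ∈ s, |y - x| < δ → ‖φ y - φ x‖ ≤ C * |y - x|

/-- The norm of `X` is Gâteaux differentiable away from `0`. -/
def GateauxSmoothNorm (X : Type*) [NormedAddCommGroup X] [NormedSpace ℝ X] : Prop :=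
  ∀ x : X, x ≠ 0 → ∃ L : X →L[ℝ] ℝ, ∀ v : X, HasLineDerivAt ℝ (fun y : X => ‖y‖) (L v) x v

/-- `g` is absolutely continuous on `[a,b]` (ε-δ definition with finite collections of
non-overlapping intervals). -/
def AbsContOn (g : ℝ → ℝ) (a b : ℝ) : Prop :=
  ∀ ε > 0, ∃ δ > 0, ∀ n : ℕ, ∀ p : Fin n → ℝ × ℝ,
    (∀ i, (p i).1 ∈ Set.Icc a b ∧ (p i).2 ∈ Set.Icc a b ∧ (p i).1 ≤ (p i).2) →
    (∀ i j, i < j → (p i).2 ≤ (p j).1) →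
    (∑ i, ((p i).2 - (p i).1)) < δ →
    (∑ i, |g (p i).2 - g (p i).1|) < ε

namespace Stmt5Aux

abbrev GapT (B : Set ℝ) := {p : ℝ × ℝ // p.1 ∈ B ∧ p.2 ∈ B ∧ p.1 < p.2 ∧ Set.Ioo p.1 p.2 ∩ B = ∅}

lemma gap_eq {B : Set ℝ} (p q : GapT B) {w : ℝ}
    (hwp : w ∈ Set.Ioo p.val.1 p.val.2) (hwq : w ∈ Set.Ioo q.val.1 q.val.2) : p = q := by
  obtain ⟨⟨p1, p2⟩, hp1, hp2, hplt, hpe⟩ := p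
  obtain ⟨⟨q1, q2⟩, hq1, hq2, hqlt, hqe⟩ := q
  simp only at hwp hwq
  have h1 : p1 = q1 := by
    rcases lt_trichotomy p1 q1 with h | h | h
    · exact absurd (Set.mem_inter (Set.mem_Ioo.mpr ⟨h, hwq.1.trans hwp.2⟩) hq1) (hpe ▸ Set.notMem_empty q1)
    · exact h
    · exact absurd (Set.mem_inter (Set.mem_Ioo.mpr ⟨h, hwp.1.trans hwq.2⟩) hp1) (hqe ▸ Set.notMem_empty p1)
  have h2 : p2 = q2 := by
    rcases lt_trichotomy p2 q2 with h | h | h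
    · exact absurd (Set.mem_inter (Set.mem_Ioo.mpr ⟨h1 ▸ hplt, h⟩) hp2) (hqe ▸ Set.notMem_empty p2)
    · exact h
    · exact absurd (Set.mem_inter (Set.mem_Ioo.mpr ⟨h1.symm ▸ hqlt, h⟩) hq2) (hpe ▸ Set.notMem_empty q2)
  exact Subtype.ext (Prod.ext h1 h2)

lemma countable_gapT (B : Set ℝ) : Countable (GapT B) := by
  have h : ∀ p : GapT B, ∃ q : ℚ, (q : ℝ) ∈ Set.Ioo p.val.1 p.val.2 := by
    intro p
    obtain ⟨q, h1, h2⟩ := exists_rat_btwn p.2.2.2.1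
    exact ⟨q, h1, h2⟩
  choose r hr using h
  have hinj : Function.Injective r := fun p q h => gap_eq p q (hr p) (h ▸ hr q)
  exact hinj.countable

lemma mem_gap {B : Set ℝ} (hB : IsClosed B) {a b z : ℝ} (ha : a ∈ B) (hb : b ∈ B)
    (hz : z ∈ Set.Icc a b) (hzB : z ∉ B) : ∃ p : GapT B, z ∈ Set.Ioo p.val.1 p.val.2 := by
  set c := sSup (B ∩ Set.Iic z) with hc
  set d := sInf (B ∩ Set.Ici z) with hd
  have hcne : (B ∩ Set.Iic z).Nonempty := ⟨a, ha, hz.1⟩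
  have hcbdd : BddAbove (B ∩ Set.Iic z) := ⟨z, fun x hx => hx.2⟩
  have hcmem : c ∈ B ∩ Set.Iic z := (hB.inter isClosed_Iic).csSup_mem hcne hcbdd
  have hdne : (B ∩ Set.Ici z).Nonempty := ⟨b, hb, hz.2⟩
  have hdbdd : BddBelow (B ∩ Set.Ici z) := ⟨z, fun x hx => hx.2⟩
  have hdmem : d ∈ B ∩ Set.Ici z := (hB.inter isClosed_Ici).csInf_mem hdne hdbdd
  have hcz : c < z := lt_of_le_of_ne hcmem.2 (fun h => hzB (h ▸ hcmem.1))
  have hzd : z < d := lt_of_le_of_ne hdmem.2 (fun h => hzB (h.symm ▸ hdmem.1))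
  have hempty : Set.Ioo c d ∩ B = ∅ := by
    apply Set.eq_empty_iff_forall_notMem.2
    rintro w ⟨⟨hw1, hw2⟩, hwB⟩
    rcases le_or_gt w z with h | h
    · exact absurd (le_csSup hcbdd ⟨hwB, h⟩) (not_le.2 hw1)
    · exact absurd (csInf_le hdbdd ⟨hwB, h.le⟩) (not_le.2 hw2)
  exact ⟨⟨(c, d), hcmem.1, hdmem.1, hcz.trans hzd, hempty⟩, hcz, hzd⟩

lemma evar_Icc_add (f : ℝ → ℝ) {c m t : ℝ} (h1 : c ≤ m) (h2 : m ≤ t) :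
    eVariationOn f (Set.Icc c m) + eVariationOn f (Set.Icc m t) = eVariationOn f (Set.Icc c t) := by
  have h := eVariationOn.Icc_add_Icc f h1 h2 (s := Set.Icc c t) ⟨h1, h2⟩
  rwa [Set.inter_eq_right.mpr (Set.Icc_subset_Icc le_rfl h2),
    Set.inter_eq_right.mpr (Set.Icc_subset_Icc h1 le_rfl), Set.inter_self] at h

lemma image_Icc_volume_le {f : ℝ → ℝ} {s t : ℝ} (hf : ContinuousOn f (Set.Icc s t)) :
    volume (f '' Set.Icc s t) ≤ eVariationOn f (Set.Icc s t) := by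
  rcases le_or_gt s t with h | h
  · have hc : IsCompact (Set.Icc s t) := isCompact_Icc
    have hne : (Set.Icc s t).Nonempty := Set.nonempty_Icc.mpr h
    obtain ⟨zM, hzM, hM⟩ := hc.exists_isMaxOn hne hf
    obtain ⟨zm, hzm, hm⟩ := hc.exists_isMinOn hne hf
    have hsub : f '' Set.Icc s t ⊆ Set.Icc (f zm) (f zM) := by
      rintro _ ⟨w, hw, rfl⟩
      exact ⟨hm hw, hM hw⟩
    calc volume (f '' Set.Icc s t) ≤ volume (Set.Icc (f zm) (f zM)) := measure_mono hsub
      _ = ENNReal.ofReal (f zM - f zm) := Real.volume_Icc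
      _ ≤ edist (f zm) (f zM) := by
          rw [edist_dist, Real.dist_eq]
          exact ENNReal.ofReal_le_ofReal (by rw [abs_sub_comm]; exact le_abs_self _)
      _ ≤ eVariationOn f (Set.Icc s t) := eVariationOn.edist_le f hzm hzM
  · simp [Set.Icc_eq_empty h.not_ge]

/-- Per-gap resummation: pieces of a gap cut by a monotone partition sum to at most
the variation over the gap. -/
lemma sum_gap_pieces_le (f : ℝ → ℝ) {c d : ℝ} (hcd : c ≤ d) {u : ℕ → ℝ} (hu : Monotone u)
    (n : ℕ) :
    ∑ i ∈ Finset.range n, eVariationOn f (Set.Icc (max (u i) c) (min (u (i + 1)) d)) ≤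
      eVariationOn f (Set.Icc c d) := by
  have key : ∀ m : ℕ,
      ∑ i ∈ Finset.range m, eVariationOn f (Set.Icc (max (u i) c) (min (u (i + 1)) d)) ≤
        eVariationOn f (Set.Icc c (min (u m) d)) := by
    intro m
    induction m with
    | zero => simp
    | succ m ih =>
      rw [Finset.sum_range_succ]
      have hminmax : min (u m) d ≤ max (u m) c := by
        rcases le_total (u m) d with h' | h'
        · exact (min_eq_left h').le.trans (le_max_left _ _)
        · exact (min_le_right _ _).trans (h'.trans (le_max_left _ _))
      rcases le_or_gt (max (u m) c) (min (u (m + 1)) d) with h | h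
      · calc _ ≤ eVariationOn f (Set.Icc c (max (u m) c)) +
              eVariationOn f (Set.Icc (max (u m) c) (min (u (m + 1)) d)) :=
            add_le_add (ih.trans (eVariationOn.mono f (Set.Icc_subset_Icc le_rfl hminmax))) le_rfl
          _ = eVariationOn f (Set.Icc c (min (u (m + 1)) d)) :=
            evar_Icc_add f (le_max_right _ _) h
      · have he : Set.Icc (max (u m) c) (min (u (m + 1)) d) = ∅ := Set.Icc_eq_empty h.not_ge
        rw [he, eVariationOn.subsingleton f Set.subsingleton_empty, add_zero]
        exact ih.trans (eVariationOn.mono f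
          (Set.Icc_subset_Icc le_rfl (min_le_min (hu (Nat.le_succ m)) le_rfl)))
  exact (key n).trans (eVariationOn.mono f (Set.Icc_subset_Icc le_rfl (min_le_right _ _)))

/-- Key estimate: a single increment of `f` is bounded by the sum over gaps of the
variation of `f` over the intersection of the gap with the increment interval. -/
lemma edist_le_tsum {a b : ℝ} {B : Set ℝ} (hB : IsClosed B) (hBs : B ⊆ Set.Icc a b)
    (ha : a ∈ B) (hb : b ∈ B) {f : ℝ → ℝ} (hf : ContinuousOn f (Set.Icc a b))
    (h0 : volume (f '' B) = 0) {x y : ℝ} (hx : x ∈ Set.Icc a b) (hy : y ∈ Set.Icc a b)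
    (hxy : x ≤ y) :
    edist (f y) (f x) ≤
      ∑' p : GapT B, eVariationOn f (Set.Icc (max x p.val.1) (min y p.val.2)) := by
  haveI : Countable (GapT B) := countable_gapT B
  have hIccsub : Set.Icc x y ⊆ Set.Icc a b := Set.Icc_subset_Icc hx.1 hy.2
  have hcover : f '' Set.Icc x y ⊆
      f '' B ∪ ⋃ p : GapT B, f '' Set.Icc (max x p.val.1) (min y p.val.2) := by
    rintro _ ⟨z, hz, rfl⟩
    by_cases hzB : z ∈ B
    · exact Or.inl (Set.mem_image_of_mem f hzB)
    · obtain ⟨p, hp⟩ := mem_gap hB ha hb (hIccsub hz) hzB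
      exact Or.inr (Set.mem_iUnion.2 ⟨p, Set.mem_image_of_mem f
        ⟨max_le hz.1 hp.1.le, le_min hz.2 hp.2.le⟩⟩)
  have h1 : edist (f y) (f x) ≤ volume (f '' Set.Icc x y) := by
    have hIVT : Set.uIcc (f x) (f y) ⊆ f '' Set.uIcc x y :=
      intermediate_value_uIcc (by rw [Set.uIcc_of_le hxy]; exact hf.mono hIccsub)
    calc edist (f y) (f x) = ENNReal.ofReal |f y - f x| := by rw [edist_dist, Real.dist_eq]
      _ = volume (Set.uIcc (f x) (f y)) := by rw [Real.volume_interval]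
      _ ≤ volume (f '' Set.uIcc x y) := measure_mono hIVT
      _ = volume (f '' Set.Icc x y) := by rw [Set.uIcc_of_le hxy]
  refine h1.trans ((measure_mono hcover).trans ?_)
  refine (measure_union_le _ _).trans ?_
  rw [h0, zero_add]
  refine (measure_iUnion_le _).trans ?_
  refine ENNReal.tsum_le_tsum fun p => ?_
  refine image_Icc_volume_le (hf.mono ?_)
  intro w hw
  exact ⟨(le_max_left x p.val.1).trans' hx.1 |>.trans hw.1, hw.2.trans ((min_le_left y _).trans hy.2)⟩

/-- Finitely many gaps, all to the left of `t`: sum of variations is at most the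
variation up to `t`. -/
lemma finsum_le {a b : ℝ} {B : Set ℝ} (hBs : B ⊆ Set.Icc a b) (f : ℝ → ℝ) :
    ∀ (n : ℕ) (s : Finset (GapT B)), s.card = n → ∀ t : ℝ, a ≤ t →
      (∀ q ∈ s, q.val.2 ≤ t) →
      ∑ q ∈ s, eVariationOn f (Set.Icc q.val.1 q.val.2) ≤ eVariationOn f (Set.Icc a t) := by
  intro n
  induction n with
  | zero =>
    intro s hcard t hat hts
    rw [Finset.card_eq_zero.mp hcard, Finset.sum_empty]
    exact zero_le
  | succ n ih =>
    intro s hcard t hat hts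
    have hne : s.Nonempty := Finset.card_pos.mp (hcard ▸ Nat.succ_pos n)
    obtain ⟨p, hp, hmax⟩ := Finset.exists_max_image s (fun q => q.val.2) hne
    have hap1 : a ≤ p.val.1 := (hBs p.2.1).1
    have herase : ∀ q ∈ s.erase p, q.val.2 ≤ p.val.1 := by
      intro q hq
      by_contra hcon
      push_neg at hcon
      have hqs := Finset.mem_of_mem_erase hq
      have hqp : q ≠ p := Finset.ne_of_mem_erase hq
      have hlt : max q.val.1 p.val.1 < q.val.2 := max_lt q.2.2.2.1 hcon
      obtain ⟨w, hw1, hw2⟩ := exists_between hlt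
      have hwq : w ∈ Set.Ioo q.val.1 q.val.2 := ⟨(le_max_left _ _).trans_lt hw1, hw2⟩
      have hwp : w ∈ Set.Ioo p.val.1 p.val.2 :=
        ⟨(le_max_right _ _).trans_lt hw1, hw2.trans_le (hmax q hqs)⟩
      exact hqp (gap_eq q p hwq hwp)
    have hsum := Finset.add_sum_erase s (fun q => eVariationOn f (Set.Icc q.val.1 q.val.2)) hp
    calc ∑ q ∈ s, eVariationOn f (Set.Icc q.val.1 q.val.2)
        = eVariationOn f (Set.Icc p.val.1 p.val.2) +
          ∑ q ∈ s.erase p, eVariationOn f (Set.Icc q.val.1 q.val.2) := hsum.symm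
      _ ≤ eVariationOn f (Set.Icc p.val.1 p.val.2) + eVariationOn f (Set.Icc a p.val.1) :=
          add_le_add le_rfl (ih (s.erase p) (by rw [Finset.card_erase_of_mem hp, hcard]; rfl)
            p.val.1 hap1 herase)
      _ = eVariationOn f (Set.Icc a p.val.2) := by
          rw [add_comm]; exact evar_Icc_add f hap1 p.2.2.2.1.le
      _ ≤ eVariationOn f (Set.Icc a t) :=
          eVariationOn.mono f (Set.Icc_subset_Icc le_rfl (hts p hp))

end Stmt5Aux

/-- If `B ⊆ [a,b]` is closed with `a, b ∈ B`, `f : [a,b] → ℝ` is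
continuous, and `λ(f(B)) = 0`, then `V(f,[a,b]) = Σᵢ V(f,[cᵢ,dᵢ])`, where `(cᵢ,dᵢ)`
are all the intervals contiguous to `B` in `[a,b]` (equality in `[0,∞]`). -/
theorem stmt5 {a b : ℝ} (hab : a < b) {B : Set ℝ} (hB : IsClosed B)
    (hBs : B ⊆ Set.Icc a b) (ha : a ∈ B) (hb : b ∈ B)
    {f : ℝ → ℝ} (hf : ContinuousOn f (Set.Icc a b))
    (h0 : volume (f '' B) = 0) :
    eVariationOn f (Set.Icc a b) =
      ∑' p : {p : ℝ × ℝ // p.1 ∈ B ∧ p.2 ∈ B ∧ p.1 < p.2 ∧ Set.Ioo p.1 p.2 ∩ B = ∅},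
        eVariationOn f (Set.Icc (p : ℝ × ℝ).1 (p : ℝ × ℝ).2) := by
  classical
  apply le_antisymm
  · rw [eVariationOn]
    refine iSup_le ?_
    rintro ⟨n, ⟨u, hu, hus⟩⟩
    calc ∑ i ∈ Finset.range n, edist (f (u (i + 1))) (f (u i))
        ≤ ∑ i ∈ Finset.range n, ∑' p : Stmt5Aux.GapT B,
            eVariationOn f (Set.Icc (max (u i) p.val.1) (min (u (i + 1)) p.val.2)) :=
          Finset.sum_le_sum fun i _ =>
            Stmt5Aux.edist_le_tsum hB hBs ha hb hf h0 (hus i) (hus (i + 1)) (hu (Nat.le_succ i))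
      _ = ∑' p : Stmt5Aux.GapT B, ∑ i ∈ Finset.range n,
            eVariationOn f (Set.Icc (max (u i) p.val.1) (min (u (i + 1)) p.val.2)) :=
          (Summable.tsum_finsetSum fun _ _ => ENNReal.summable).symm
      _ ≤ ∑' p : Stmt5Aux.GapT B, eVariationOn f (Set.Icc p.val.1 p.val.2) :=
          ENNReal.tsum_le_tsum fun p => Stmt5Aux.sum_gap_pieces_le f p.2.2.2.1.le hu n
  · rw [ENNReal.tsum_eq_iSup_sum]
    exact iSup_le fun s =>
      Stmt5Aux.finsum_le hBs f s.card s rfl b hab.le (fun q _ => (hBs q.2.2.1).2)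
end

section
/- Let α∈(0,1), let A⊂ℝ be bounded, and let f:A→ℝ be uniformly continuous with V_α(f,A) < ∞. Then the closure of f(A) has Lebesgue measure zero. -/
open Set MeasureTheory
open scoped ENNReal NNReal

lemma sum_le_fracVar (α : ℝ) (g : ℝ → ℝ) (K : Set ℝ) {n : ℕ} (p : Fin n → ℝ × ℝ)
    (h1 : ∀ i, (p i).1 ∈ K ∧ (p i).2 ∈ K ∧ (p i).1 ≤ (p i).2)
    (h2 : ∀ i j, i < j → (p i).2 ≤ (p j).1) :
    ∑ i, ENNReal.ofReal (|g (p i).2 - g (p i).1| ^ α) ≤ fracVar α g K :=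
  le_iSup_of_le n (le_iSup_of_le p (le_iSup_of_le h1 (le_iSup_of_le h2 le_rfl)))

lemma greedy (n : ℕ) : ∀ (K : Set ℝ), IsClosed K → BddBelow K →
    ∀ δ : ℝ, 0 < δ → ENNReal.ofReal (n * δ) < volume K →
    ∃ z : Fin (n+1) → ℝ, (∀ i, z i ∈ K) ∧ ∀ i j, i < j → z i + δ ≤ z j := by
  induction n with
  | zero =>
    intro K hK hB δ hδ hvol
    have hne : K.Nonempty := by
      by_contra h
      rw [Set.not_nonempty_iff_eq_empty] at h
      simp [h] at hvol
    refine ⟨fun _ => sInf K, fun _ => hK.csInf_mem hne hB, fun i j hij => ?_⟩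
    exact absurd hij (by omega)
  | succ n ih =>
    intro K hK hB δ hδ hvol
    have hne : K.Nonempty := by
      by_contra h
      rw [Set.not_nonempty_iff_eq_empty] at h
      simp [h] at hvol
    set m := sInf K with hm_def
    have hm : m ∈ K := hK.csInf_mem hne hB
    set K' := K ∩ Set.Ici (m + δ) with hK'_def
    have hsub : K ⊆ Set.Ico m (m + δ) ∪ K' := by
      intro x hx
      rcases lt_or_ge x (m + δ) with h | h
      · exact Or.inl ⟨csInf_le hB hx, h⟩
      · exact Or.inr ⟨hx, h⟩
    have hvol' : ENNReal.ofReal (n * δ) < volume K' := by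
      have h1 : volume K ≤ ENNReal.ofReal δ + volume K' := by
        calc volume K ≤ volume (Set.Ico m (m + δ) ∪ K') := measure_mono hsub
          _ ≤ volume (Set.Ico m (m + δ)) + volume K' := measure_union_le _ _
          _ = ENNReal.ofReal δ + volume K' := by rw [Real.volume_Ico]; ring_nf
      have h2 : ENNReal.ofReal ((n + 1 : ℕ) * δ) = ENNReal.ofReal δ + ENNReal.ofReal (n * δ) := by
        rw [← ENNReal.ofReal_add hδ.le (by positivity)]
        push_cast
        ring_nf
      have h3 := hvol.trans_le h1
      rw [h2] at h3
      exact (ENNReal.add_lt_add_iff_left ENNReal.ofReal_ne_top).mp h3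
    obtain ⟨z', hz'K, hz'⟩ := ih K' (hK.inter isClosed_Ici)
      (BddBelow.mono Set.inter_subset_left hB) δ hδ hvol'
    refine ⟨Fin.cases m z', ?_, ?_⟩
    · intro i
      induction i using Fin.cases with
      | zero => simpa using hm
      | succ i => simpa using (hz'K i).1
    · intro i j hij
      induction j using Fin.cases with
      | zero => exact absurd hij (Fin.not_lt_zero i)
      | succ j =>
        induction i using Fin.cases with
        | zero => simpa using (hz'K j).2
        | succ i =>
          simp only [Fin.cases_succ]
          exact hz' i j (by exact Fin.succ_lt_succ_iff.mp hij)


/-- If `α ∈ (0,1)`, `A ⊆ ℝ` is bounded, and `f : A → ℝ` is uniformly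
continuous with `V_α(f,A) < ∞`, then the closure of `f(A)` has Lebesgue measure zero. -/
theorem stmt6 {α : ℝ} (hα : α ∈ Set.Ioo (0:ℝ) 1) {A : Set ℝ}
    (hA : Bornology.IsBounded A) {f : ℝ → ℝ} (hf : UniformContinuousOn f A)
    (hV : fracVar α f A < ⊤) :
    volume (closure (f '' A)) = 0 := by
  obtain ⟨hα0, hα1⟩ := hα
  rcases A.eq_empty_or_nonempty with rfl | ⟨a0, ha0⟩
  · simp
  by_contra hvol0
  set V := (fracVar α f A).toReal with hV_def
  have hV0 : 0 ≤ V := ENNReal.toReal_nonneg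
  -- single interval bound
  have hsingle : ∀ x ∈ A, ∀ y ∈ A, x ≤ y → |f y - f x| ^ α ≤ V := by
    intro x hx y hy h
    have hle := sum_le_fracVar α f A (fun _ : Fin 1 => (x, y))
      (fun _ => ⟨hx, hy, h⟩) (fun i j hij => absurd hij (by omega))
    rw [Fin.sum_univ_one] at hle
    have h2 := ENNReal.toReal_mono hV.ne hle
    rwa [ENNReal.toReal_ofReal (Real.rpow_nonneg (abs_nonneg _) _)] at h2
  set B := (V + 1) ^ α⁻¹ with hB_def
  have hBnd : ∀ x ∈ A, f a0 - B ≤ f x := by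
    intro x hx
    have h1 : |f x - f a0| ^ α ≤ V := by
      rcases le_total a0 x with h | h
      · exact hsingle a0 ha0 x hx h
      · rw [abs_sub_comm]; exact hsingle x hx a0 ha0 h
    have h2 : |f x - f a0| ≤ B := by
      by_contra h
      push_neg at h
      have hB0 : 0 ≤ B := Real.rpow_nonneg (by linarith) _
      have h3 := Real.rpow_lt_rpow hB0 h hα0
      rw [hB_def, ← Real.rpow_mul (by linarith : (0:ℝ) ≤ V + 1),
        inv_mul_cancel₀ hα0.ne', Real.rpow_one] at h3
      linarith
    have h4 := abs_le.mp h2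
    linarith [h4.1]
  set K := closure (f '' A) with hK_def
  have hKcl : IsClosed K := isClosed_closure
  have hKbdd : BddBelow K := by
    have hsub : f '' A ⊆ Set.Ici (f a0 - B) := by
      rintro _ ⟨x, hx, rfl⟩; exact hBnd x hx
    have : K ⊆ Set.Ici (f a0 - B) := closure_minimal hsub isClosed_Ici
    exact BddBelow.mono this bddBelow_Ici
  have hpos : 0 < volume K := pos_iff_ne_zero.mpr hvol0
  obtain ⟨c, hc0, hcK⟩ := exists_between hpos
  have hcTop : c ≠ ⊤ := by
    intro h; rw [h] at hcK; exact absurd hcK not_top_lt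
  set L := c.toReal with hL_def
  have hL0 : 0 < L := ENNReal.toReal_pos hc0.ne' hcTop
  have hLc : ENNReal.ofReal L = c := ENNReal.ofReal_toReal hcTop
  have key : ∀ N : ℕ, 1 ≤ N → (N:ℝ) ^ (1 - α) * (L/4) ^ α ≤ V := by
    intro N hN1
    have hN0 : (0:ℝ) < N := by exact_mod_cast hN1
    set δ := L / (N + 1) with hδ_def
    have hδ0 : 0 < δ := by positivity
    have hNδ : ENNReal.ofReal (N * δ) < volume K := by
      refine lt_of_le_of_lt ?_ (hLc ▸ hcK)
      apply ENNReal.ofReal_le_ofReal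
      rw [hδ_def]
      calc (N:ℝ) * (L/(N+1)) = L * (N/(N+1)) := by ring
        _ ≤ L * 1 := by
            apply mul_le_mul_of_nonneg_left _ hL0.le
            rw [div_le_one (by positivity)]; linarith
        _ = L := mul_one L
    obtain ⟨z, hzK, hzsep⟩ := greedy N K hKcl hKbdd δ hδ0 hNδ
    have hzsep' : ∀ i j : Fin (N+1), i ≠ j → δ ≤ |z i - z j| := by
      intro i j hij
      rcases lt_or_gt_of_ne hij with h | h
      · have := hzsep i j h
        rw [abs_sub_comm, abs_of_nonneg (by linarith)]; linarith
      · have := hzsep j i h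
        rw [abs_of_nonneg (by linarith)]; linarith
    have happ : ∀ i : Fin (N+1), ∃ x, x ∈ A ∧ |z i - f x| < δ/4 := by
      intro i
      have hz := hzK i
      rw [hK_def, Metric.mem_closure_iff] at hz
      obtain ⟨w, hw, hdist⟩ := hz (δ/4) (by positivity)
      obtain ⟨x, hxA, rfl⟩ := hw
      exact ⟨x, hxA, by rwa [Real.dist_eq] at hdist⟩
    choose x hxA hxz using happ
    have hwsep : ∀ i j : Fin (N+1), i ≠ j → δ/2 ≤ |f (x i) - f (x j)| := by
      intro i j hij
      have h1 := hxz i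
      have h2 := hxz j
      have h3 := hzsep' i j hij
      have h4 : |z i - z j| ≤ |z i - f (x i)| + |f (x i) - f (x j)| + |f (x j) - z j| := by
        have := abs_add_three (z i - f (x i)) (f (x i) - f (x j)) (f (x j) - z j)
        calc |z i - z j| = |(z i - f (x i)) + (f (x i) - f (x j)) + (f (x j) - z j)| := by
              ring_nf
          _ ≤ _ := this
      have h2' : |f (x j) - z j| < δ/4 := by rw [abs_sub_comm]; exact h2
      linarith
    set σ := Tuple.sort x with hσ
    set y := x ∘ σ with hy
    have hymono : Monotone y := Tuple.monotone_sort x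
    set p : Fin N → ℝ × ℝ := fun i => (y i.castSucc, y i.succ) with hp
    have h1 : ∀ i, (p i).1 ∈ A ∧ (p i).2 ∈ A ∧ (p i).1 ≤ (p i).2 := by
      intro i
      exact ⟨hxA _, hxA _, hymono (Fin.castSucc_lt_succ : i.castSucc < i.succ).le⟩
    have h2 : ∀ i j, i < j → (p i).2 ≤ (p j).1 := by
      intro i j hij
      apply hymono
      show i.succ ≤ j.castSucc
      simp only [Fin.le_def, Fin.val_succ, Fin.coe_castSucc]
      rw [Fin.lt_def] at hij
      omega
    have hsum := sum_le_fracVar α f A p h1 h2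
    have hterm : ∀ i : Fin N,
        ENNReal.ofReal ((δ/2) ^ α) ≤ ENNReal.ofReal (|f (p i).2 - f (p i).1| ^ α) := by
      intro i
      apply ENNReal.ofReal_le_ofReal
      refine Real.rpow_le_rpow (by positivity) ?_ hα0.le
      apply hwsep
      intro h
      have h5 := σ.injective h
      rw [Fin.ext_iff, Fin.val_succ, Fin.coe_castSucc] at h5
      omega
    have hlow : (N : ℝ≥0∞) * ENNReal.ofReal ((δ/2) ^ α) ≤ fracVar α f A := by
      calc (N : ℝ≥0∞) * ENNReal.ofReal ((δ/2) ^ α)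
          = ∑ _i : Fin N, ENNReal.ofReal ((δ/2) ^ α) := by
            simp [Finset.sum_const, nsmul_eq_mul]
        _ ≤ ∑ i, ENNReal.ofReal (|f (p i).2 - f (p i).1| ^ α) :=
            Finset.sum_le_sum (fun i _ => hterm i)
        _ ≤ fracVar α f A := hsum
    have hreal : (N : ℝ) * (δ/2) ^ α ≤ V := by
      have h6 := ENNReal.toReal_mono hV.ne hlow
      rw [ENNReal.toReal_mul, ENNReal.toReal_ofReal (by positivity : (0:ℝ) ≤ (δ/2)^α)] at h6
      have hcast : ((N : ℝ≥0∞)).toReal = (N : ℝ) := by simp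
      rwa [hcast] at h6
    have hd : L/(4*N) ≤ δ/2 := by
      rw [hδ_def]
      rw [div_div]
      apply div_le_div_of_nonneg_left hL0.le (by positivity)
      have hN1' : (1:ℝ) ≤ N := by exact_mod_cast hN1
      linarith
    have hfinal : (N:ℝ) * (L/(4*N)) ^ α ≤ V :=
      le_trans (mul_le_mul_of_nonneg_left
        (Real.rpow_le_rpow (by positivity) hd hα0.le) hN0.le) hreal
    have heq : (N:ℝ) * (L/(4*N)) ^ α = (N:ℝ)^(1-α) * (L/4) ^ α := by
      have h4 : L/(4*N) = (L/4)/N := by ring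
      rw [h4, Real.div_rpow (by positivity) hN0.le, Real.rpow_sub hN0, Real.rpow_one]
      ring
    linarith [heq ▸ hfinal]
  have htend : Filter.Tendsto (fun N : ℕ => (N:ℝ)^(1-α) * (L/4)^α)
      Filter.atTop Filter.atTop := by
    apply Filter.Tendsto.atTop_mul_const (by positivity : (0:ℝ) < (L/4)^α)
    exact (tendsto_rpow_atTop (by linarith)).comp tendsto_natCast_atTop_atTop
  obtain ⟨N, hN⟩ := ((htend.eventually_gt_atTop V).and (Filter.eventually_ge_atTop 1)).exists
  exact absurd (key N hN.2) hN.1.not_ge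
end

section
/- Let h_m:[a,b]→[c_m,d_m] (m in a subset M of ℕ) be continuous increasing functions such that Σ_{m∈M} h_m(x) < ∞ for all x∈[a,b]. Let K⊂[a,b] be a closed set such that λ(h_m(K))=0 for all m∈M. Then the function h:[a,b]→ℝ defined by h(x):=Σ_{m∈M} h_m(x) is continuous and increasing, and λ(h(K))=0. -/
open Set MeasureTheory
open scoped ENNReal NNReal

/-- If `h_m : [a,b] → [c_m,d_m]` (`m ∈ M ⊆ ℕ`) are continuous increasing
functions with `Σ_{m∈M} h_m(x) < ∞` for all `x ∈ [a,b]`, and `K ⊆ [a,b]` is closed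
with `λ(h_m(K)) = 0` for all `m ∈ M`, then `h := Σ_{m∈M} h_m` is continuous and
increasing, and `λ(h(K)) = 0`. -/
theorem stmt9 {a b : ℝ} (hab : a < b) {M : Set ℕ} {h : ℕ → ℝ → ℝ} {c d : ℕ → ℝ}
    (hcont : ∀ m ∈ M, ContinuousOn (h m) (Set.Icc a b))
    (hmono : ∀ m ∈ M, MonotoneOn (h m) (Set.Icc a b))
    (hmap : ∀ m ∈ M, Set.MapsTo (h m) (Set.Icc a b) (Set.Icc (c m) (d m)))
    (hsum : ∀ x ∈ Set.Icc a b, Summable (fun m : M => h (m : ℕ) x))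
    {K : Set ℝ} (hK : IsClosed K) (hKs : K ⊆ Set.Icc a b)
    (h0 : ∀ m ∈ M, volume (h m '' K) = 0) :
    ContinuousOn (fun x => ∑' m : M, h (m : ℕ) x) (Set.Icc a b) ∧
    MonotoneOn (fun x => ∑' m : M, h (m : ℕ) x) (Set.Icc a b) ∧
    volume ((fun x => ∑' m : M, h (m : ℕ) x) '' K) = 0 := by
  have hmemA : a ∈ Icc a b := ⟨le_rfl, hab.le⟩
  have hmemB : b ∈ Icc a b := ⟨hab.le, le_rfl⟩
  set Hf : ℝ → ℝ := fun x => ∑' m : M, h (m : ℕ) x with hHfdef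
  have hgsum : Summable (fun m : M => h (m : ℕ) b - h (m : ℕ) a) :=
    (hsum b hmemB).sub (hsum a hmemA)
  have hdiffsum : ∀ x ∈ Icc a b, ∀ y ∈ Icc a b,
      Summable (fun m : M => h (m : ℕ) y - h (m : ℕ) x) := fun x hx y hy =>
    (hsum y hy).sub (hsum x hx)
  have hbound : ∀ x ∈ Icc a b, ∀ y ∈ Icc a b, ∀ m : M,
      |h (m : ℕ) y - h (m : ℕ) x| ≤ h (m : ℕ) b - h (m : ℕ) a := by
    intro x hx y hy m
    have h1 := hmono m m.2 hmemA hx hx.1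
    have h2 := hmono m m.2 hx hmemB hx.2
    have h3 := hmono m m.2 hmemA hy hy.1
    have h4 := hmono m m.2 hy hmemB hy.2
    rw [abs_le]; constructor <;> linarith
  have Hmono : MonotoneOn Hf (Icc a b) := by
    intro x hx y hy hxy
    exact Summable.tsum_le_tsum (fun m => hmono m m.2 hx hy hxy) (hsum x hx) (hsum y hy)
  have Hdiff : ∀ x ∈ Icc a b, ∀ y ∈ Icc a b,
      Hf y - Hf x = ∑' m : M, (h (m : ℕ) y - h (m : ℕ) x) := by
    intro x hx y hy
    rw [Summable.tsum_sub (hsum y hy) (hsum x hx)]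
  -- continuity
  have Hcont : ContinuousOn Hf (Icc a b) := by
    rw [Metric.continuousOn_iff]
    intro x₀ hx₀ ε hε
    obtain ⟨F, hF⟩ : ∃ F : Finset M,
        ∑' m : ((↑F : Set M)ᶜ : Set M), (h ((m : M) : ℕ) b - h ((m : M) : ℕ) a) < ε / 4 := by
      have h1 := hgsum.hasSum
      have h2 : ∀ᶠ F : Finset M in Filter.atTop,
          (∑' m : M, (h (m : ℕ) b - h (m : ℕ) a)) - ε / 4
            < ∑ m ∈ F, (h (m : ℕ) b - h (m : ℕ) a) :=
        h1.eventually (eventually_gt_nhds (by linarith))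
      obtain ⟨F, hF⟩ := h2.exists
      refine ⟨F, ?_⟩
      have h3 := Summable.sum_add_tsum_compl (s := F) hgsum
      linarith
    set sF : ℝ → ℝ := fun x => ∑ m ∈ F, h ((m : M) : ℕ) x with hsFdef
    have hsFcont : ContinuousOn sF (Icc a b) :=
      continuousOn_finset_sum F (fun m _ => hcont (m : ℕ) m.2)
    rw [Metric.continuousOn_iff] at hsFcont
    obtain ⟨δ, hδ, hδ2⟩ := hsFcont x₀ hx₀ (ε / 2) (by linarith)
    refine ⟨δ, hδ, fun y hy hyd => ?_⟩
    have hsplit : ∀ z ∈ Icc a b, Hf z = sF z +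
        ∑' m : ((↑F : Set M)ᶜ : Set M), h ((m : M) : ℕ) z := by
      intro z hz
      exact (Summable.sum_add_tsum_compl (s := F) (hsum z hz)).symm
    have htail : |(∑' m : ((↑F : Set M)ᶜ : Set M), h ((m : M) : ℕ) y)
        - ∑' m : ((↑F : Set M)ᶜ : Set M), h ((m : M) : ℕ) x₀| ≤
        ∑' m : ((↑F : Set M)ᶜ : Set M), (h ((m : M) : ℕ) b - h ((m : M) : ℕ) a) := by
      have hsy : Summable (fun m : ((↑F : Set M)ᶜ : Set M) => h ((m : M) : ℕ) y) :=
        (hsum y hy).subtype _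
      have hsx : Summable (fun m : ((↑F : Set M)ᶜ : Set M) => h ((m : M) : ℕ) x₀) :=
        (hsum x₀ hx₀).subtype _
      have hsg : Summable (fun m : ((↑F : Set M)ᶜ : Set M) =>
          h ((m : M) : ℕ) b - h ((m : M) : ℕ) a) := hgsum.subtype _
      rw [← Summable.tsum_sub hsy hsx]
      have hs : Summable (fun m : ((↑F : Set M)ᶜ : Set M) =>
          h ((m : M) : ℕ) y - h ((m : M) : ℕ) x₀) := hsy.sub hsx
      rw [abs_le]
      constructor
      · rw [neg_le, ← tsum_neg]
        refine Summable.tsum_le_tsum (fun m => ?_) hs.neg hsg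
        have := hbound x₀ hx₀ y hy m
        rw [abs_le] at this; linarith [this.1]
      · refine Summable.tsum_le_tsum (fun m => ?_) hs hsg
        have := hbound x₀ hx₀ y hy m
        rw [abs_le] at this; linarith [this.2]
    have h2 := hδ2 y hy hyd
    rw [Real.dist_eq] at h2 ⊢
    rw [hsplit y hy, hsplit x₀ hx₀]
    calc |sF y + (∑' m : ((↑F : Set M)ᶜ : Set M), h ((m : M) : ℕ) y)
        - (sF x₀ + ∑' m : ((↑F : Set M)ᶜ : Set M), h ((m : M) : ℕ) x₀)|
        ≤ |sF y - sF x₀| + |(∑' m : ((↑F : Set M)ᶜ : Set M), h ((m : M) : ℕ) y)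
          - ∑' m : ((↑F : Set M)ᶜ : Set M), h ((m : M) : ℕ) x₀| := by
          have := abs_add_le (sF y - sF x₀)
            ((∑' m : ((↑F : Set M)ᶜ : Set M), h ((m : M) : ℕ) y)
            - ∑' m : ((↑F : Set M)ᶜ : Set M), h ((m : M) : ℕ) x₀)
          calc _ = |(sF y - sF x₀) + ((∑' m : ((↑F : Set M)ᶜ : Set M), h ((m : M) : ℕ) y)
              - ∑' m : ((↑F : Set M)ᶜ : Set M), h ((m : M) : ℕ) x₀)| := by ring_nf
            _ ≤ _ := this
      _ < ε / 2 + ε / 4 := by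
          have := lt_of_le_of_lt htail hF
          linarith
      _ < ε := by linarith
  refine ⟨Hcont, Hmono, ?_⟩
  -- measure part
  rcases K.eq_empty_or_nonempty with hKe | ⟨k₀, hk₀⟩
  · rw [hKe, Set.image_empty, measure_empty]
  have hKcp : IsCompact K := isCompact_Icc.of_isClosed_subset hK hKs
  set u := sInf K with hu_def
  set v := sSup K with hv_def
  have hu : u ∈ K := hKcp.sInf_mem ⟨k₀, hk₀⟩
  have hv : v ∈ K := hKcp.sSup_mem ⟨k₀, hk₀⟩
  have hKuv : K ⊆ Icc u v := fun x hx =>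
    ⟨csInf_le hKcp.bddBelow hx, le_csSup hKcp.bddAbove hx⟩
  have huv : u ≤ v := (hKuv hk₀).1.trans (hKuv hk₀).2
  have huab : u ∈ Icc a b := hKs hu
  have hvab : v ∈ Icc a b := hKs hv
  have hsubab : Icc u v ⊆ Icc a b := Icc_subset_Icc huab.1 hvab.2
  -- gap structure
  set P : ℚ → ℝ := fun q => sSup (K ∩ Iic (q : ℝ)) with hP_def
  set R : ℚ → ℝ := fun q => sInf (K ∩ Ici (q : ℝ)) with hR_def
  set Q : Set ℚ := {q : ℚ | (q : ℝ) ∈ Ioo u v ∧ (q : ℝ) ∉ K} with hQ_def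
  have hPmem : ∀ q ∈ Q, P q ∈ K ∩ Iic (q : ℝ) := by
    intro q hq
    exact (hKcp.inter_right isClosed_Iic).sSup_mem ⟨u, hu, hq.1.1.le⟩
  have hRmem : ∀ q ∈ Q, R q ∈ K ∩ Ici (q : ℝ) := by
    intro q hq
    exact (hKcp.inter_right isClosed_Ici).sInf_mem ⟨v, hv, hq.1.2.le⟩
  have hPlt : ∀ q ∈ Q, P q < (q : ℝ) :=
    fun q hq => lt_of_le_of_ne (hPmem q hq).2 (fun e => hq.2 (e ▸ (hPmem q hq).1))
  have hRgt : ∀ q ∈ Q, (q : ℝ) < R q := by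
    intro q hq
    refine lt_of_le_of_ne (hRmem q hq).2 (fun e => hq.2 ?_)
    rw [e]; exact (hRmem q hq).1
  have hgap : ∀ q ∈ Q, Ioo (P q) (R q) ∩ K = ∅ := by
    intro q hq
    ext x
    simp only [mem_inter_iff, mem_Ioo, mem_empty_iff_false, iff_false, not_and]
    rintro ⟨h1, h2⟩ hxK
    rcases le_total x (q : ℝ) with hle | hle
    · exact absurd (le_csSup (hKcp.bddAbove.mono inter_subset_left) ⟨hxK, mem_Iic.2 hle⟩)
        (not_le.2 h1)
    · exact absurd (csInf_le (hKcp.bddBelow.mono inter_subset_left) ⟨hxK, mem_Ici.2 hle⟩)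
        (not_le.2 h2)
  have heqd : ∀ q ∈ Q, ∀ q' ∈ Q, (Ioo (P q) (R q) ∩ Ioo (P q') (R q')).Nonempty →
      P q = P q' ∧ R q = R q' := by
    intro q hq q' hq' ⟨z, hz, hz'⟩
    have hP : ∀ q₁ ∈ Q, ∀ q₂ ∈ Q, z ∈ Ioo (P q₁) (R q₁) → z ∈ Ioo (P q₂) (R q₂) →
        P q₁ ≤ P q₂ := by
      intro q₁ hq₁ q₂ hq₂ hz₁ hz₂
      by_contra hlt
      push_neg at hlt
      have : P q₁ ∈ Ioo (P q₂) (R q₂) ∩ K :=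
        ⟨⟨hlt, lt_trans hz₁.1 hz₂.2⟩, (hPmem q₁ hq₁).1⟩
      rw [hgap q₂ hq₂] at this
      exact this
    have hR : ∀ q₁ ∈ Q, ∀ q₂ ∈ Q, z ∈ Ioo (P q₁) (R q₁) → z ∈ Ioo (P q₂) (R q₂) →
        R q₂ ≤ R q₁ := by
      intro q₁ hq₁ q₂ hq₂ hz₁ hz₂
      by_contra hlt
      push_neg at hlt
      have : R q₁ ∈ Ioo (P q₂) (R q₂) ∩ K :=
        ⟨⟨lt_trans hz₂.1 hz₁.2, hlt⟩, (hRmem q₁ hq₁).1⟩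
      rw [hgap q₂ hq₂] at this
      exact this
    exact ⟨le_antisymm (hP q hq q' hq' hz hz') (hP q' hq' q hq hz' hz),
      le_antisymm (hR q' hq' q hq hz' hz) (hR q hq q' hq' hz hz')⟩
  set T : Set (ℝ × ℝ) := (fun q : ℚ => (P q, R q)) '' Q with hT_def
  have hTcount : T.Countable := (Q.to_countable).image _
  have hTK : ∀ e ∈ T, e.1 ∈ K ∧ e.2 ∈ K ∧ e.1 < e.2 ∧ Ioo e.1 e.2 ∩ K = ∅ := by
    rintro e ⟨q, hq, rfl⟩
    exact ⟨(hPmem q hq).1, (hRmem q hq).1, lt_trans (hPlt q hq) (hRgt q hq), hgap q hq⟩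
  have hTord : ∀ e ∈ T, ∀ e' ∈ T, e ≠ e' → e.2 ≤ e'.1 ∨ e'.2 ≤ e.1 := by
    rintro e ⟨q, hq, rfl⟩ e' ⟨q', hq', rfl⟩ hne
    by_contra hc
    push_neg at hc
    obtain ⟨h1, h2⟩ := hc
    have hlt : max (P q) (P q') < min (R q) (R q') :=
      max_lt (lt_min (lt_trans (hPlt q hq) (hRgt q hq)) h2)
        (lt_min h1 (lt_trans (hPlt q' hq') (hRgt q' hq')))
    obtain ⟨z, hz⟩ := exists_between hlt
    have hzmem : z ∈ Ioo (P q) (R q) ∩ Ioo (P q') (R q') := by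
      constructor
      · exact ⟨lt_of_le_of_lt (le_max_left _ _) hz.1, lt_of_lt_of_le hz.2 (min_le_left _ _)⟩
      · exact ⟨lt_of_le_of_lt (le_max_right _ _) hz.1, lt_of_lt_of_le hz.2 (min_le_right _ _)⟩
    obtain ⟨hPe, hRe⟩ := heqd q hq q' hq' ⟨z, hzmem⟩
    exact hne (Prod.ext hPe hRe)
  have hTcov : ∀ x ∈ Icc u v, x ∉ K → ∃ e ∈ T, x ∈ Ioo e.1 e.2 := by
    intro x hx hxK
    have hxu : u < x := lt_of_le_of_ne hx.1 (fun e => hxK (e ▸ hu))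
    have hxv : x < v := lt_of_le_of_ne hx.2 (fun e => hxK (e ▸ hv))
    obtain ⟨δ, hδ, hball⟩ := Metric.isOpen_iff.1 hK.isOpen_compl x hxK
    obtain ⟨q, hq1, hq2⟩ := exists_rat_btwn (lt_min (lt_add_of_pos_right x hδ) hxv)
    have hqx : (q : ℝ) - x < δ := by
      have := lt_of_lt_of_le hq2 (min_le_left _ _); linarith
    have hqK : (q : ℝ) ∉ K := by
      intro hc
      exact hball (by rw [Metric.mem_ball, Real.dist_eq, abs_of_pos (by linarith)]; linarith) hc
    have hqQ : q ∈ Q := ⟨⟨lt_trans hxu hq1, lt_of_lt_of_le hq2 (min_le_right _ _)⟩, hqK⟩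
    refine ⟨(P q, R q), ⟨q, hqQ, rfl⟩, ?_, ?_⟩
    · have hPx : P q ≤ x := by
        refine csSup_le ⟨u, hu, mem_Iic.2 (le_of_lt (lt_trans hxu hq1))⟩ ?_
        rintro k ⟨hkK, hkq⟩
        rw [mem_Iic] at hkq
        by_contra hk
        push_neg at hk
        exact hball (by rw [Metric.mem_ball, Real.dist_eq, abs_of_pos (by linarith)]; linarith) hkK
      exact lt_of_le_of_ne hPx (fun e => hxK (e ▸ (hPmem q hqQ).1))
    · exact lt_trans hq1 (hRgt q hqQ)
  -- disjointness of image intervals for monotone maps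
  have hpair : ∀ φ : ℝ → ℝ, MonotoneOn φ (Icc a b) →
      T.PairwiseDisjoint (fun e : ℝ × ℝ => Ioo (φ e.1) (φ e.2)) := by
    intro φ hφ e he e' he' hne
    simp only [Function.onFun]
    have hKab : ∀ x ∈ K, x ∈ Icc a b := fun x hx => hKs hx
    rcases hTord e he e' he' hne with hord | hord
    · rw [Set.disjoint_left]
      intro y hy hy'
      have : φ e.2 ≤ φ e'.1 := hφ (hKab _ (hTK e he).2.1) (hKab _ (hTK e' he').1) hord
      exact absurd (lt_of_lt_of_le hy.2 (le_trans this hy'.1.le)) (lt_irrefl y)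
    · rw [Set.disjoint_left]
      intro y hy hy'
      have : φ e'.2 ≤ φ e.1 := hφ (hKab _ (hTK e' he').2.1) (hKab _ (hTK e he).1) hord
      exact absurd (lt_of_lt_of_le hy'.2 (le_trans this hy.1.le)) (lt_irrefl y)
  have hvolU : ∀ φ : ℝ → ℝ, MonotoneOn φ (Icc a b) →
      volume (⋃ e ∈ T, Ioo (φ e.1) (φ e.2)) =
        ∑' e : T, ENNReal.ofReal (φ (e : ℝ × ℝ).2 - φ (e : ℝ × ℝ).1) := by
    intro φ hφ
    rw [measure_biUnion hTcount (hpair φ hφ) (fun e _ => measurableSet_Ioo)]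
    exact tsum_congr fun e => Real.volume_Ioo
  -- the per-pair identity and Fubini
  have hTab : ∀ e ∈ T, e.1 ∈ Icc a b ∧ e.2 ∈ Icc a b := fun e he =>
    ⟨hKs (hTK e he).1, hKs (hTK e he).2.1⟩
  have hW : volume (⋃ e ∈ T, Ioo (Hf e.1) (Hf e.2)) =
      ∑' m : M, volume (⋃ e ∈ T, Ioo (h (m : ℕ) e.1) (h (m : ℕ) e.2)) := by
    rw [hvolU Hf Hmono]
    have step1 : ∀ e : T, ENNReal.ofReal (Hf (e : ℝ × ℝ).2 - Hf (e : ℝ × ℝ).1) =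
        ∑' m : M, ENNReal.ofReal (h (m : ℕ) (e : ℝ × ℝ).2 - h (m : ℕ) (e : ℝ × ℝ).1) := by
      intro e
      have h1 := hTab e e.2
      rw [Hdiff _ h1.1 _ h1.2]
      exact ENNReal.ofReal_tsum_of_nonneg
        (fun m => sub_nonneg.2 (hmono m m.2 h1.1 h1.2 ((hTK e e.2).2.2.1).le))
        (hdiffsum _ h1.1 _ h1.2)
    rw [tsum_congr step1, ENNReal.tsum_comm]
    refine tsum_congr fun m => ?_
    rw [hvolU (h (m : ℕ)) (hmono m m.2)]
  -- lower bound for each m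
  have hmlow : ∀ m : M, ENNReal.ofReal (h (m : ℕ) v - h (m : ℕ) u) ≤
      volume (⋃ e ∈ T, Ioo (h (m : ℕ) e.1) (h (m : ℕ) e.2)) := by
    intro m
    set Wm := ⋃ e ∈ T, Ioo (h (m : ℕ) e.1) (h (m : ℕ) e.2) with hWm_def
    set Nm := ⋃ e ∈ T, ({h (m : ℕ) e.1} ∪ {h (m : ℕ) e.2} : Set ℝ) with hNm_def
    have hNmc : Nm.Countable :=
      hTcount.biUnion (fun e _ => (countable_singleton _).union (countable_singleton _))
    have hcover : Icc (h (m : ℕ) u) (h (m : ℕ) v) ⊆ (h (m : ℕ) '' K) ∪ Wm ∪ Nm := by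
      intro y hy
      obtain ⟨x, hx, hxy⟩ := intermediate_value_Icc huv ((hcont m m.2).mono hsubab) hy
      by_cases hxK : x ∈ K
      · exact Or.inl (Or.inl ⟨x, hxK, hxy⟩)
      · obtain ⟨e, he, hxe⟩ := hTcov x hx hxK
        have h1 := hTab e he
        have hy1 : h (m : ℕ) e.1 ≤ y := hxy ▸ hmono m m.2 h1.1 (hsubab hx) hxe.1.le
        have hy2 : y ≤ h (m : ℕ) e.2 := hxy ▸ hmono m m.2 (hsubab hx) h1.2 hxe.2.le
        rcases eq_or_lt_of_le hy1 with he1 | he1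
        · exact Or.inr (mem_biUnion he (Or.inl he1.symm))
        rcases eq_or_lt_of_le hy2 with he2 | he2
        · exact Or.inr (mem_biUnion he (Or.inr he2))
        · exact Or.inl (Or.inr (mem_biUnion he ⟨he1, he2⟩))
    calc ENNReal.ofReal (h (m : ℕ) v - h (m : ℕ) u)
        = volume (Icc (h (m : ℕ) u) (h (m : ℕ) v)) := (Real.volume_Icc).symm
      _ ≤ volume ((h (m : ℕ) '' K) ∪ Wm ∪ Nm) := measure_mono hcover
      _ ≤ volume ((h (m : ℕ) '' K) ∪ Wm) + volume Nm := measure_union_le _ _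
      _ ≤ volume (h (m : ℕ) '' K) + volume Wm + volume Nm := by
          gcongr; exact measure_union_le _ _
      _ = volume Wm := by
          rw [h0 m m.2, hNmc.measure_zero, zero_add, add_zero]
  -- final
  have hWlow : ENNReal.ofReal (Hf v - Hf u) ≤ volume (⋃ e ∈ T, Ioo (Hf e.1) (Hf e.2)) := by
    rw [hW]
    calc ENNReal.ofReal (Hf v - Hf u)
        = ENNReal.ofReal (∑' m : M, (h (m : ℕ) v - h (m : ℕ) u)) := by
          rw [Hdiff u huab v hvab]
      _ = ∑' m : M, ENNReal.ofReal (h (m : ℕ) v - h (m : ℕ) u) :=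
          ENNReal.ofReal_tsum_of_nonneg
            (fun m => sub_nonneg.2 (hmono m m.2 huab hvab huv))
            (hdiffsum u huab v hvab)
      _ ≤ _ := ENNReal.tsum_le_tsum fun m => hmlow m
  set W := ⋃ e ∈ T, Ioo (Hf e.1) (Hf e.2) with hW_def
  have hWsub : W ⊆ Icc (Hf u) (Hf v) := by
    refine iUnion₂_subset fun e he => ?_
    have h1 := hTab e he
    have h2 := hTK e he
    refine Ioo_subset_Icc_self.trans (Icc_subset_Icc ?_ ?_)
    · exact Hmono huab h1.1 (hKuv h2.1).1
    · exact Hmono h1.2 hvab (hKuv h2.2.1).2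
  have hWmeas : MeasurableSet W :=
    MeasurableSet.biUnion hTcount (fun e _ => measurableSet_Ioo)
  have hWfin : volume W ≠ ⊤ :=
    ((measure_mono hWsub).trans_lt (by rw [Real.volume_Icc]; exact ENNReal.ofReal_lt_top)).ne
  have himgsub : Hf '' K ⊆ Icc (Hf u) (Hf v) \ W := by
    rintro y ⟨x, hxK, rfl⟩
    constructor
    · exact ⟨Hmono huab (hKs hxK) (hKuv hxK).1, Hmono (hKs hxK) hvab (hKuv hxK).2⟩
    · intro hyW
      obtain ⟨e, he, hye⟩ := mem_iUnion₂.1 hyW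
      have h1 := hTab e he
      have hx1 : e.1 < x := by
        by_contra hc
        push_neg at hc
        exact absurd (Hmono (hKs hxK) h1.1 hc) (not_le.2 hye.1)
      have hx2 : x < e.2 := by
        by_contra hc
        push_neg at hc
        exact absurd (Hmono h1.2 (hKs hxK) hc) (not_le.2 hye.2)
      have : x ∈ Ioo e.1 e.2 ∩ K := ⟨⟨hx1, hx2⟩, hxK⟩
      rw [(hTK e he).2.2.2] at this
      exact this
  refine le_antisymm ?_ (by positivity)
  calc volume (Hf '' K) ≤ volume (Icc (Hf u) (Hf v) \ W) := measure_mono himgsub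
    _ = volume (Icc (Hf u) (Hf v)) - volume W :=
        measure_diff hWsub hWmeas.nullMeasurableSet hWfin
    _ = 0 := by
        rw [Real.volume_Icc]
        exact tsub_eq_zero_of_le hWlow
end

section
/- There exists a continuous function f:[0,1]→ℝ of bounded variation such that f is not VBG_{1/2}, but there exist closed sets A_m ⊂ K_f (m∈ℕ) with K_f = ∪_m A_m and V_{1/2}(f, A_m) < ∞ for every m. (Hence in the definition of VBG_{1/2} one cannot equivalently replace v_f by f, even for real-valued functions.) -/
open Set MeasureTheory
open scoped ENNReal NNReal

/-! ### The Cantor set via ternary strings -/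

namespace Stmt12

/-- Left endpoint of the basic interval coded by a list of bools
(head = most significant ternary digit, `true` ↦ digit 2, `false` ↦ digit 0). -/
noncomputable def dig (b : Bool) : ℝ := if b then 2/3 else 0

@[simp] lemma dig_false : dig false = 0 := rfl
@[simp] lemma dig_true : dig true = 2/3 := rfl

lemma dig_nonneg (b : Bool) : 0 ≤ dig b := by cases b <;> norm_num [dig]
lemma dig_le (b : Bool) : dig b ≤ 2/3 := by cases b <;> norm_num [dig]

noncomputable def Lx : List Bool → ℝ
  | [] => 0
  | b :: s => dig b + Lx s / 3

@[simp] lemma Lx_nil : Lx [] = 0 := rfl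

lemma Lx_cons (b : Bool) (s : List Bool) :
    Lx (b :: s) = dig b + Lx s / 3 := rfl

lemma Lx_nonneg (s : List Bool) : 0 ≤ Lx s := by
  induction s with
  | nil => simp
  | cons b s ih =>
    rw [Lx_cons]
    linarith [dig_nonneg b]

lemma Rx_le_one (s : List Bool) : Lx s + ((3:ℝ)⁻¹) ^ s.length ≤ 1 := by
  induction s with
  | nil => simp
  | cons b s ih =>
    rw [Lx_cons]
    have := dig_le b
    simp only [List.length_cons, pow_succ]
    nlinarith [Lx_nonneg s]

lemma Lx_le_one (s : List Bool) : Lx s ≤ 1 := by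
  have := Rx_le_one s
  have : (0:ℝ) < (3:ℝ)⁻¹ ^ s.length := by positivity
  linarith [Rx_le_one s]

lemma Lx_append (s t : List Bool) :
    Lx (s ++ t) = Lx s + Lx t * ((3:ℝ)⁻¹) ^ s.length := by
  induction s with
  | nil => simp
  | cons b s ih =>
    simp only [List.cons_append, Lx_cons, ih, List.length_cons, pow_succ]
    ring

/-- The basic (closed) interval coded by `s`. -/
def basic (s : List Bool) : Set ℝ :=
  Set.Icc (Lx s) (Lx s + ((3:ℝ)⁻¹) ^ s.length)

lemma basic_append_subset (s t : List Bool) : basic (s ++ t) ⊆ basic s := by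
  intro x hx
  simp only [basic, Set.mem_Icc] at hx ⊢
  rw [Lx_append, List.length_append] at hx
  have h1 : (0:ℝ) ≤ Lx t := Lx_nonneg t
  have h2 := Rx_le_one t
  have h3 : (0:ℝ) < ((3:ℝ)⁻¹) ^ s.length := by positivity
  have h4 : (0:ℝ) < ((3:ℝ)⁻¹) ^ t.length := by positivity
  constructor
  · nlinarith
  · have : ((3:ℝ)⁻¹) ^ (s.length + t.length) = ((3:ℝ)⁻¹) ^ s.length * ((3:ℝ)⁻¹) ^ t.length :=
      pow_add _ _ _
    nlinarith

/-- Membership in a `cons` basic interval, rescaled. -/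
lemma mem_basic_cons {x : ℝ} {b : Bool} {s : List Bool} :
    x ∈ basic (b :: s) ↔ (x - dig b) * 3 ∈ basic s := by
  simp only [basic, Set.mem_Icc, Lx_cons, List.length_cons, pow_succ]
  constructor <;> rintro ⟨h1, h2⟩ <;> constructor <;> linarith

lemma basic_disj : ∀ s t : List Bool, s.length = t.length → s ≠ t →
    ∀ x, x ∈ basic s → x ∈ basic t → False := by
  intro s
  induction s with
  | nil =>
    intro t hlen hne x _ _
    exact hne (by cases t with
      | nil => rfl
      | cons c t => simp at hlen)
  | cons b s ih =>
    intro t hlen hne x hxs hxt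
    cases t with
    | nil => simp at hlen
    | cons c t =>
      simp only [List.length_cons, Nat.succ.injEq] at hlen
      by_cases hbc : b = c
      · subst hbc
        have hne' : s ≠ t := fun h => hne (by rw [h])
        exact ih t hlen hne' _ (mem_basic_cons.1 hxs) (mem_basic_cons.1 hxt)
      · -- heads differ: the two intervals live in [0,1/3] and [2/3,1]
        have key : ∀ (d : Bool) (u : List Bool) (y : ℝ), y ∈ basic (d :: u) →
            (d = false → y ≤ 1/3) ∧ (d = true → 2/3 ≤ y) := by
          intro d u y hy
          simp only [basic, Set.mem_Icc, Lx_cons, List.length_cons, pow_succ] at hy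
          constructor
          · rintro rfl
            simp only [dig_false] at hy
            have := Rx_le_one u
            have h3 : (0:ℝ) < ((3:ℝ)⁻¹) ^ u.length := by positivity
            nlinarith [hy.2]
          · rintro rfl
            simp only [dig_true] at hy
            have := Lx_nonneg u
            linarith [hy.1]
        cases b <;> cases c
        · exact hbc rfl
        · linarith [(key false s x hxs).1 rfl, (key true t x hxt).2 rfl]
        · linarith [(key true s x hxs).2 rfl, (key false t x hxt).1 rfl]
        · exact hbc rfl

/-- The finset of strings of length `n`. -/
def SF (n : ℕ) : Finset (List Bool) :=
  (Finset.univ : Finset (Fin n → Bool)).image List.ofFn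

lemma mem_SF {n : ℕ} {s : List Bool} : s ∈ SF n ↔ s.length = n := by
  constructor
  · intro hs
    rcases Finset.mem_image.1 hs with ⟨g, -, rfl⟩
    simp
  · intro hs
    subst hs
    exact Finset.mem_image.2 ⟨s.get, Finset.mem_univ _, List.ofFn_get s⟩

/-- Level-`n` stage of the Cantor set construction. -/
def CN (n : ℕ) : Set ℝ := ⋃ s ∈ SF n, basic s

lemma isClosed_CN (n : ℕ) : IsClosed (CN n) :=
  (SF n).finite_toSet.isClosed_biUnion (fun _ _ => isClosed_Icc)

lemma mem_CN {n : ℕ} {x : ℝ} : x ∈ CN n ↔ ∃ s, s.length = n ∧ x ∈ basic s := by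
  simp only [CN, Set.mem_iUnion, exists_prop, mem_SF]

lemma CN_succ_subset (n : ℕ) : CN (n+1) ⊆ CN n := by
  intro x hx
  rcases mem_CN.1 hx with ⟨t, hlen, hxt⟩
  refine mem_CN.2 ⟨t.take n, ?_, ?_⟩
  · rw [List.length_take, hlen]; omega
  · have := basic_append_subset (t.take n) (t.drop n)
    rw [List.take_append_drop] at this
    exact this hxt

lemma CN_antitone {m n : ℕ} (h : m ≤ n) : CN n ⊆ CN m := by
  induction n with
  | zero => simpa [Nat.le_zero.1 h]
  | succ k ih =>
    rcases Nat.lt_or_ge m (k+1) with h' | h'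
    · exact fun x hx => ih (by omega) (CN_succ_subset k hx)
    · have : m = k + 1 := by omega
      subst this; exact fun x hx => hx

/-- The Cantor set. -/
def CC : Set ℝ := ⋂ n, CN n

lemma isClosed_CC : IsClosed CC := isClosed_iInter (fun n => isClosed_CN n)

lemma CC_subset_Icc : CC ⊆ Set.Icc 0 1 := by
  intro x hx
  have h0 : x ∈ CN 0 := Set.mem_iInter.1 hx 0
  rcases mem_CN.1 h0 with ⟨s, hlen, hxs⟩
  have : s = [] := List.length_eq_zero_iff.1 hlen
  subst this
  simpa [basic] using hxs


/-! ### Gaps of the Cantor set -/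

/-- Width of the gap in the middle of `basic s`. -/
noncomputable def Wd (s : List Bool) : ℝ := ((3:ℝ)⁻¹) ^ (s.length + 1)

lemma Wd_pos (s : List Bool) : 0 < Wd s := by
  have : (0:ℝ) < (3:ℝ)⁻¹ := by norm_num
  exact pow_pos this _

/-- Left endpoint of the middle-third gap of `basic s`. -/
noncomputable def uu (s : List Bool) : ℝ := Lx s + Wd s

/-- Right endpoint of the middle-third gap of `basic s`. -/
noncomputable def ww (s : List Bool) : ℝ := Lx s + 2 * Wd s

/-- Midpoint of the gap. -/
noncomputable def md (s : List Bool) : ℝ := Lx s + (3/2) * Wd s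

/-- The open middle-third gap of `basic s`. -/
def gap (s : List Bool) : Set ℝ := Set.Ioo (uu s) (ww s)

lemma uu_lt_md (s : List Bool) : uu s < md s := by
  have := Wd_pos s; simp only [uu, md]; linarith

lemma md_lt_ww (s : List Bool) : md s < ww s := by
  have := Wd_pos s; simp only [ww, md]; linarith

lemma md_sub_uu (s : List Bool) : md s - uu s = Wd s / 2 := by
  simp only [uu, md]; ring

lemma ww_sub_md (s : List Bool) : ww s - md s = Wd s / 2 := by
  simp only [ww, md]; ring

lemma pow_len_eq (s : List Bool) : ((3:ℝ)⁻¹) ^ s.length = 3 * Wd s := by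
  simp only [Wd, pow_succ]; ring

lemma gap_subset_basic (s : List Bool) : gap s ⊆ basic s := by
  intro x hx
  rcases hx with ⟨h1, h2⟩
  have hW := Wd_pos s
  constructor
  · simp only [uu] at h1; linarith
  · rw [pow_len_eq]; simp only [ww] at h2; linarith

lemma Lx_append_singleton (s : List Bool) (b : Bool) :
    Lx (s ++ [b]) = Lx s + dig b * 3 * Wd s := by
  rw [Lx_append]
  simp only [Lx_cons, Lx_nil, pow_len_eq]
  ring

lemma basic_false_ub {x : ℝ} {s : List Bool} (hx : x ∈ basic (s ++ [false])) : x ≤ uu s := by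
  rcases hx with ⟨-, h2⟩
  rw [Lx_append_singleton, List.length_append] at h2
  simp only [dig_false, List.length_cons, List.length_nil] at h2
  have : ((3:ℝ)⁻¹) ^ (s.length + 1) = Wd s := rfl
  simp only [uu]
  calc x ≤ Lx s + 0 * 3 * Wd s + (3:ℝ)⁻¹ ^ (s.length + 1) := h2
  _ = Lx s + Wd s := by rw [this]; ring

lemma basic_true_lb {x : ℝ} {s : List Bool} (hx : x ∈ basic (s ++ [true])) : ww s ≤ x := by
  rcases hx with ⟨h1, -⟩
  rw [Lx_append_singleton] at h1
  simp only [dig_true] at h1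
  simp only [ww]
  calc Lx s + 2 * Wd s = Lx s + 2/3 * 3 * Wd s := by ring
  _ ≤ x := h1

lemma gap_not_mem_CN {x : ℝ} {s : List Bool} (hx : x ∈ gap s) : x ∉ CN (s.length + 1) := by
  intro hmem
  rcases mem_CN.1 hmem with ⟨t, hlen, hxt⟩
  by_cases hts : t.take s.length = s
  · -- t = s ++ [b]
    have hdrop : ∃ b, t.drop s.length = [b] := by
      have : (t.drop s.length).length = 1 := by
        rw [List.length_drop, hlen]; omega
      exact List.length_eq_one_iff.1 this
    rcases hdrop with ⟨b, hb⟩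
    have ht : t = s ++ [b] := by
      conv_lhs => rw [← List.take_append_drop s.length t, hts, hb]
    subst ht
    cases b
    · exact absurd (basic_false_ub hxt) (not_le.2 hx.1)
    · exact absurd (basic_true_lb hxt) (not_le.2 hx.2)
  · -- basic (t.take n) is disjoint from basic s
    have hlen' : (t.take s.length).length = s.length := by
      rw [List.length_take, hlen]; omega
    have hxt' : x ∈ basic (t.take s.length) := by
      have := basic_append_subset (t.take s.length) (t.drop s.length)
      rw [List.take_append_drop] at this
      exact this hxt
    exact basic_disj _ s hlen' hts x hxt' (gap_subset_basic s hx)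

lemma gap_disjoint_CC (s : List Bool) : ∀ x ∈ gap s, x ∉ CC := by
  intro x hx hCC
  exact gap_not_mem_CN hx (Set.mem_iInter.1 hCC (s.length + 1))

/-- Two distinct gaps are disjoint. -/
lemma gap_eq_of_mem {x : ℝ} {s t : List Bool} (hs : x ∈ gap s) (ht : x ∈ gap t) : s = t := by
  -- auxiliary, assuming length s ≤ length t
  have aux : ∀ s t : List Bool, s.length ≤ t.length →
      ∀ x, x ∈ gap s → x ∈ gap t → s = t := by
    intro s t hle x hs ht
    by_cases hts : t.take s.length = s
    · rcases Nat.eq_or_lt_of_le hle with heq | hlt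
      · rw [← hts, List.take_of_length_le (le_of_eq heq.symm)]
      · -- t extends s ++ [b], contradiction with x in gap s
        have h1 : x ∈ basic (t.take (s.length + 1)) := by
          have := basic_append_subset (t.take (s.length + 1)) (t.drop (s.length + 1))
          rw [List.take_append_drop] at this
          exact this (gap_subset_basic t ht)
        have hdrop : ∃ b, (t.take (s.length + 1)).drop s.length = [b] := by
          have : ((t.take (s.length + 1)).drop s.length).length = 1 := by
            rw [List.length_drop, List.length_take]; omega
          exact List.length_eq_one_iff.1 this
        rcases hdrop with ⟨b, hb⟩
        have htt : t.take (s.length + 1) = s ++ [b] := by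
          conv_lhs => rw [← List.take_append_drop s.length (t.take (s.length + 1))]
          rw [List.take_take, min_eq_left (by omega), hts, hb]
        rw [htt] at h1
        cases b
        · exact absurd (basic_false_ub h1) (not_le.2 hs.1)
        · exact absurd (basic_true_lb h1) (not_le.2 hs.2)
    · have hlen' : (t.take s.length).length = s.length := by
        rw [List.length_take]; omega
      have hxt' : x ∈ basic (t.take s.length) := by
        have := basic_append_subset (t.take s.length) (t.drop s.length)
        rw [List.take_append_drop] at this
        exact this (gap_subset_basic t ht)
      exact absurd (gap_subset_basic s hs) (fun h => basic_disj _ s hlen' hts x hxt' h)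
  rcases le_total s.length t.length with h | h
  · exact aux s t h x hs ht
  · exact (aux t s h x ht hs).symm

/-- Right endpoints of basic intervals. -/
noncomputable def Rx (s : List Bool) : ℝ := Lx s + ((3:ℝ)⁻¹) ^ s.length

lemma Rx_append_true (s : List Bool) : Rx (s ++ [true]) = Rx s := by
  simp only [Rx, Lx_append_singleton, dig_true, List.length_append, List.length_cons,
    List.length_nil, pow_len_eq]
  have : ((3:ℝ)⁻¹) ^ (s.length + 1) = Wd s := rfl
  rw [pow_add]
  simp only [Wd, pow_succ] at this ⊢
  ring

lemma Lx_append_replicate_false (s : List Bool) (j : ℕ) :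
    Lx (s ++ List.replicate j false) = Lx s := by
  induction j with
  | zero => simp
  | succ k ih =>
    have : List.replicate (k+1) false = List.replicate k false ++ [false] := by
      rw [List.replicate_succ']
    rw [this, ← List.append_assoc, Lx_append_singleton, ih]
    simp

lemma Rx_append_replicate_true (s : List Bool) (j : ℕ) :
    Rx (s ++ List.replicate j true) = Rx s := by
  induction j with
  | zero => simp
  | succ k ih =>
    have : List.replicate (k+1) true = List.replicate k true ++ [true] := by
      rw [List.replicate_succ']
    rw [this, ← List.append_assoc, Rx_append_true, ih]

lemma Lx_mem_basic (s : List Bool) : Lx s ∈ basic s := by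
  constructor
  · exact le_refl _
  · have : (0:ℝ) < ((3:ℝ)⁻¹) ^ s.length := by positivity
    linarith

lemma Rx_mem_basic (s : List Bool) : Rx s ∈ basic s := by
  constructor
  · have : (0:ℝ) < ((3:ℝ)⁻¹) ^ s.length := by positivity
    simp only [Rx]; linarith
  · exact le_refl _

lemma Lx_mem_CC (s : List Bool) : Lx s ∈ CC := by
  refine Set.mem_iInter.2 (fun n => ?_)
  rcases le_or_gt n s.length with h | h
  · exact CN_antitone h (mem_CN.2 ⟨s, rfl, Lx_mem_basic s⟩)
  · refine mem_CN.2 ⟨s ++ List.replicate (n - s.length) false, ?_, ?_⟩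
    · rw [List.length_append, List.length_replicate]; omega
    · rw [← Lx_append_replicate_false s (n - s.length)]
      exact Lx_mem_basic _

lemma Rx_mem_CC (s : List Bool) : Rx s ∈ CC := by
  refine Set.mem_iInter.2 (fun n => ?_)
  rcases le_or_gt n s.length with h | h
  · exact CN_antitone h (mem_CN.2 ⟨s, rfl, Rx_mem_basic s⟩)
  · refine mem_CN.2 ⟨s ++ List.replicate (n - s.length) true, ?_, ?_⟩
    · rw [List.length_append, List.length_replicate]; omega
    · rw [← Rx_append_replicate_true s (n - s.length)]
      exact Rx_mem_basic _

lemma uu_eq_Rx (s : List Bool) : uu s = Rx (s ++ [false]) := by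
  simp only [uu, Rx, Lx_append_singleton, dig_false, List.length_append, List.length_cons,
    List.length_nil]
  have : ((3:ℝ)⁻¹) ^ (s.length + 1) = Wd s := rfl
  rw [this]; ring

lemma ww_eq_Lx (s : List Bool) : ww s = Lx (s ++ [true]) := by
  rw [Lx_append_singleton]
  simp only [ww, dig_true]; ring

lemma uu_mem_CC (s : List Bool) : uu s ∈ CC := by rw [uu_eq_Rx]; exact Rx_mem_CC _
lemma ww_mem_CC (s : List Bool) : ww s ∈ CC := by rw [ww_eq_Lx]; exact Lx_mem_CC _

lemma uu_nonneg (s : List Bool) : 0 ≤ uu s := (CC_subset_Icc (uu_mem_CC s)).1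
lemma ww_le_one (s : List Bool) : ww s ≤ 1 := (CC_subset_Icc (ww_mem_CC s)).2
lemma md_pos (s : List Bool) : 0 < md s := lt_of_le_of_lt (uu_nonneg s) (uu_lt_md s)
lemma md_lt_one (s : List Bool) : md s < 1 := lt_of_lt_of_le (md_lt_ww s) (ww_le_one s)

lemma mem_basic_append_false {x : ℝ} {s : List Bool} (h1 : Lx s ≤ x) (h2 : x ≤ uu s) :
    x ∈ basic (s ++ [false]) := by
  have hW : ((3:ℝ)⁻¹) ^ ((s ++ [false]).length) = Wd s := by
    simp only [List.length_append, List.length_cons, List.length_nil, Wd]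
  simp only [basic, Set.mem_Icc, Lx_append_singleton, dig_false, hW]
  simp only [uu] at h2
  constructor <;> linarith

lemma mem_basic_append_true {x : ℝ} {s : List Bool} (h1 : ww s ≤ x) (h2 : x ≤ Rx s) :
    x ∈ basic (s ++ [true]) := by
  have hW : ((3:ℝ)⁻¹) ^ ((s ++ [true]).length) = Wd s := by
    simp only [List.length_append, List.length_cons, List.length_nil, Wd]
  simp only [basic, Set.mem_Icc, Lx_append_singleton, dig_true, hW]
  simp only [ww] at h1
  simp only [Rx, pow_len_eq] at h2
  constructor <;> linarith

/-- Every point of `[0,1]` not in the Cantor set lies in some gap. -/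
lemma exists_gap {x : ℝ} (hx : x ∈ Set.Icc (0:ℝ) 1) (hxC : x ∉ CC) :
    ∃ s, x ∈ gap s := by
  have h0 : x ∈ CN 0 := mem_CN.2 ⟨[], rfl, by simpa [basic] using hx⟩
  have hex : ∃ n, x ∉ CN n := by
    by_contra h
    push_neg at h
    exact hxC (Set.mem_iInter.2 h)
  classical
  let k := Nat.find hex
  have hk : x ∉ CN k := Nat.find_spec hex
  have hkpos : k ≠ 0 := fun h => hk (h ▸ h0)
  obtain ⟨m, hm⟩ : ∃ m, k = m + 1 := ⟨k - 1, by omega⟩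
  have hxm : x ∈ CN m := by
    by_contra h
    exact absurd (Nat.find_min' hex h) (by omega)
  rcases mem_CN.1 hxm with ⟨s, hlen, hxs⟩
  have hk' : x ∉ CN (s.length + 1) := by rw [hlen, ← hm]; exact hk
  refine ⟨s, ?_, ?_⟩
  · by_contra h
    push_neg at h
    refine hk' (mem_CN.2 ⟨s ++ [false], by simp, mem_basic_append_false hxs.1 h⟩)
  · by_contra h
    push_neg at h
    have h2 : x ≤ Rx s := hxs.2
    refine hk' (mem_CN.2 ⟨s ++ [true], by simp, mem_basic_append_true h h2⟩)

/-- Every point of the Cantor set has basic intervals (hence gaps) arbitrarily close. -/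
lemma CC_approx {x : ℝ} (hx : x ∈ CC) (n : ℕ) :
    ∃ s : List Bool, s.length = n ∧ x ∈ basic s := mem_CN.1 (Set.mem_iInter.1 hx n)

lemma basic_diam {s : List Bool} {x y : ℝ} (hx : x ∈ basic s) (hy : y ∈ basic s) :
    |x - y| ≤ ((3:ℝ)⁻¹) ^ s.length := by
  rw [abs_le]
  rcases hx with ⟨h1, h2⟩
  rcases hy with ⟨h3, h4⟩
  constructor <;> linarith

/-! ### The function -/

/-- Height of the tent over the gap of `basic s`. -/
noncomputable def Ht (s : List Bool) : ℝ := ((4:ℝ)⁻¹) ^ (s.length + 1)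

lemma Ht_pos (s : List Bool) : 0 < Ht s := by
  have : (0:ℝ) < (4:ℝ)⁻¹ := by norm_num
  exact pow_pos this _

/-- Slope of the tent. -/
noncomputable def sl (s : List Bool) : ℝ := 2 * Ht s / Wd s

lemma sl_pos (s : List Bool) : 0 < sl s := div_pos (by linarith [Ht_pos s]) (Wd_pos s)

lemma sl_half_width (s : List Bool) : sl s * (Wd s / 2) = Ht s := by
  rw [sl]
  have h := (Wd_pos s).ne'
  field_simp

/-- The tent function over the gap of `basic s`. -/
noncomputable def tent (s : List Bool) (x : ℝ) : ℝ := max 0 (Ht s - sl s * |x - md s|)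

lemma tent_nonneg (s : List Bool) (x : ℝ) : 0 ≤ tent s x := le_max_left _ _

lemma tent_le (s : List Bool) (x : ℝ) : tent s x ≤ Ht s := by
  apply max_le (le_of_lt (Ht_pos s))
  have : 0 ≤ sl s * |x - md s| := mul_nonneg (le_of_lt (sl_pos s)) (abs_nonneg _)
  linarith

lemma tent_eq_zero_of_not_gap {s : List Bool} {x : ℝ} (hx : x ∉ gap s) : tent s x = 0 := by
  have habs : Wd s / 2 ≤ |x - md s| := by
    rcases not_and_or.1 ((Set.mem_Ioo (a := uu s)).not.1 hx) with h | h
    · push_neg at h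
      rw [abs_sub_comm, abs_of_nonneg (by linarith [md_sub_uu s, Wd_pos s] : 0 ≤ md s - x)]
      linarith [md_sub_uu s]
    · push_neg at h
      rw [abs_of_nonneg (by linarith [ww_sub_md s, Wd_pos s] : 0 ≤ x - md s)]
      linarith [ww_sub_md s]
  apply max_eq_left
  have h1 : sl s * (Wd s / 2) ≤ sl s * |x - md s| :=
    mul_le_mul_of_nonneg_left habs (le_of_lt (sl_pos s))
  rw [sl_half_width] at h1
  linarith

lemma tent_md (s : List Bool) : tent s (md s) = Ht s := by
  simp only [tent, sub_self, abs_zero, mul_zero, sub_zero]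
  exact max_eq_right (le_of_lt (Ht_pos s))

lemma tent_eq_left {s : List Bool} {x : ℝ} (hx : x ∈ Set.Icc (uu s) (md s)) :
    tent s x = Ht s - sl s * (md s - x) := by
  have h1 : |x - md s| = md s - x := by
    rw [abs_sub_comm, abs_of_nonneg (by linarith [hx.2] : 0 ≤ md s - x)]
  rw [tent, h1]
  apply max_eq_right
  have h2 : md s - x ≤ Wd s / 2 := by linarith [hx.1, md_sub_uu s]
  have := mul_le_mul_of_nonneg_left h2 (le_of_lt (sl_pos s))
  rw [sl_half_width] at this
  linarith

lemma tent_eq_right {s : List Bool} {x : ℝ} (hx : x ∈ Set.Icc (md s) (ww s)) :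
    tent s x = Ht s - sl s * (x - md s) := by
  have h1 : |x - md s| = x - md s := abs_of_nonneg (by linarith [hx.1])
  rw [tent, h1]
  apply max_eq_right
  have h2 : x - md s ≤ Wd s / 2 := by linarith [hx.2, ww_sub_md s]
  have := mul_le_mul_of_nonneg_left h2 (le_of_lt (sl_pos s))
  rw [sl_half_width] at this
  linarith

lemma tent_monoOn (s : List Bool) : MonotoneOn (tent s) (Set.Icc (uu s) (md s)) := by
  intro x hx y hy hxy
  rw [tent_eq_left hx, tent_eq_left hy]
  have := mul_le_mul_of_nonneg_left (by linarith : md s - y ≤ md s - x) (le_of_lt (sl_pos s))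
  linarith

lemma tent_antiOn (s : List Bool) : AntitoneOn (tent s) (Set.Icc (md s) (ww s)) := by
  intro x hx y hy hxy
  rw [tent_eq_right hx, tent_eq_right hy]
  have := mul_le_mul_of_nonneg_left (by linarith : y - md s ≥ x - md s) (le_of_lt (sl_pos s))
  linarith

lemma tent_continuous (s : List Bool) : Continuous (tent s) := by
  apply Continuous.max continuous_const
  exact continuous_const.sub (continuous_const.mul ((continuous_id.sub continuous_const).abs))

/-- Sum of the level-`n` tents. -/
noncomputable def FL (n : ℕ) (x : ℝ) : ℝ := ∑ s ∈ SF n, tent s x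

lemma FL_continuous (n : ℕ) : Continuous (FL n) :=
  continuous_finset_sum _ (fun s _ => tent_continuous s)

lemma card_SF (n : ℕ) : (SF n).card = 2 ^ n := by
  rw [SF, Finset.card_image_of_injective _ (List.ofFn_injective), Finset.card_univ]
  simp [Fintype.card_fun]

lemma FL_nonneg (n : ℕ) (x : ℝ) : 0 ≤ FL n x :=
  Finset.sum_nonneg (fun s _ => tent_nonneg s x)

lemma FL_le (n : ℕ) (x : ℝ) : FL n x ≤ (2:ℝ) ^ n * ((4:ℝ)⁻¹) ^ (n + 1) := by
  calc FL n x ≤ ∑ s ∈ SF n, ((4:ℝ)⁻¹) ^ (n+1) := by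
        apply Finset.sum_le_sum
        intro s hs
        have := tent_le s x
        rwa [Ht, mem_SF.1 hs] at this
  _ = ((SF n).card : ℝ) * ((4:ℝ)⁻¹) ^ (n+1) := by rw [Finset.sum_const, nsmul_eq_mul]
  _ = (2:ℝ) ^ n * ((4:ℝ)⁻¹) ^ (n + 1) := by rw [card_SF]; norm_num

lemma bound_eq (n : ℕ) : (2:ℝ) ^ n * ((4:ℝ)⁻¹) ^ (n + 1) = (4:ℝ)⁻¹ * ((2:ℝ)⁻¹) ^ n := by
  rw [pow_succ]
  have : (2:ℝ) ^ n * ((4:ℝ)⁻¹) ^ n = ((2:ℝ)⁻¹) ^ n := by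
    rw [← mul_pow]; norm_num
  calc (2:ℝ) ^ n * (((4:ℝ)⁻¹) ^ n * (4:ℝ)⁻¹) = ((2:ℝ) ^ n * ((4:ℝ)⁻¹) ^ n) * (4:ℝ)⁻¹ := by ring
  _ = ((2:ℝ)⁻¹) ^ n * (4:ℝ)⁻¹ := by rw [this]
  _ = (4:ℝ)⁻¹ * ((2:ℝ)⁻¹) ^ n := by ring

lemma summable_bound : Summable (fun n : ℕ => (2:ℝ) ^ n * ((4:ℝ)⁻¹) ^ (n + 1)) := by
  have h : Summable (fun n : ℕ => (4:ℝ)⁻¹ * ((2:ℝ)⁻¹) ^ n) :=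
    (summable_geometric_of_lt_one (by norm_num) (by norm_num)).mul_left _
  exact h.congr (fun n => (bound_eq n).symm)

lemma FL_norm_le (n : ℕ) (x : ℝ) : ‖FL n x‖ ≤ (2:ℝ) ^ n * ((4:ℝ)⁻¹) ^ (n + 1) := by
  rw [Real.norm_eq_abs, abs_of_nonneg (FL_nonneg n x)]
  exact FL_le n x

lemma summable_FL (x : ℝ) : Summable (fun n => FL n x) :=
  Summable.of_norm_bounded summable_bound (fun n => FL_norm_le n x)

/-- The example function. -/
noncomputable def theF (x : ℝ) : ℝ := ∑' n, FL n x

lemma theF_continuous : Continuous theF :=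
  continuous_tsum FL_continuous summable_bound FL_norm_le

lemma FL_eq_zero_of_no_gap {n : ℕ} {x : ℝ} (h : ∀ s : List Bool, s.length = n → x ∉ gap s) :
    FL n x = 0 :=
  Finset.sum_eq_zero (fun s hs => tent_eq_zero_of_not_gap (h s (mem_SF.1 hs)))

lemma theF_eq_tent {s : List Bool} {x : ℝ} (hx : x ∈ gap s) : theF x = tent s x := by
  have h1 : ∀ n, n ≠ s.length → FL n x = 0 := by
    intro n hn
    apply FL_eq_zero_of_no_gap
    intro t ht hxt
    exact hn (by rw [← gap_eq_of_mem hxt hx, ht])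
  rw [theF, tsum_eq_single s.length h1]
  rw [FL, Finset.sum_eq_single s]
  · intro t ht htne
    exact tent_eq_zero_of_not_gap (fun hxt => htne (gap_eq_of_mem hxt hx))
  · intro hs
    exact absurd (mem_SF.2 rfl) hs

lemma theF_eq_zero_CC {x : ℝ} (hx : x ∈ CC) : theF x = 0 := by
  rw [theF]
  convert tsum_zero with n
  apply FL_eq_zero_of_no_gap
  intro s _ hxs
  exact gap_disjoint_CC s x hxs hx

lemma theF_eqOn_gap (s : List Bool) :
    Set.EqOn theF (tent s) (Set.Icc (uu s) (ww s)) := by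
  intro x hx
  rcases eq_or_lt_of_le hx.1 with h1 | h1
  · rw [← h1, theF_eq_zero_CC (uu_mem_CC s),
      tent_eq_zero_of_not_gap (fun h => lt_irrefl _ h.1)]
  rcases eq_or_lt_of_le hx.2 with h2 | h2
  · rw [h2, theF_eq_zero_CC (ww_mem_CC s),
      tent_eq_zero_of_not_gap (fun h => lt_irrefl _ h.2)]
  exact theF_eq_tent ⟨h1, h2⟩

lemma theF_monoOn (s : List Bool) : MonotoneOn theF (Set.Icc (uu s) (md s)) := by
  intro x hx y hy hxy
  have hsub : Set.Icc (uu s) (md s) ⊆ Set.Icc (uu s) (ww s) :=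
    Set.Icc_subset_Icc le_rfl (le_of_lt (md_lt_ww s))
  rw [theF_eqOn_gap s (hsub hx), theF_eqOn_gap s (hsub hy)]
  exact tent_monoOn s hx hy hxy

lemma theF_antiOn (s : List Bool) : AntitoneOn theF (Set.Icc (md s) (ww s)) := by
  intro x hx y hy hxy
  have hsub : Set.Icc (md s) (ww s) ⊆ Set.Icc (uu s) (ww s) :=
    Set.Icc_subset_Icc (le_of_lt (uu_lt_md s)) le_rfl
  rw [theF_eqOn_gap s (hsub hx), theF_eqOn_gap s (hsub hy)]
  exact tent_antiOn s hx hy hxy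

lemma theF_md (s : List Bool) : theF (md s) = Ht s := by
  rw [theF_eqOn_gap s ⟨le_of_lt (uu_lt_md s), le_of_lt (md_lt_ww s)⟩, tent_md]

lemma theF_uu (s : List Bool) : theF (uu s) = 0 := theF_eq_zero_CC (uu_mem_CC s)
lemma theF_ww (s : List Bool) : theF (ww s) = 0 := theF_eq_zero_CC (ww_mem_CC s)

/-! ### Variation computations -/

lemma evar_Icc_add (φ : ℝ → ℝ) {a b c : ℝ} (hab : a ≤ b) (hbc : b ≤ c) :
    eVariationOn φ (Set.Icc a b) + eVariationOn φ (Set.Icc b c)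
      = eVariationOn φ (Set.Icc a c) := by
  have := eVariationOn.Icc_add_Icc φ (s := Set.univ) hab hbc (Set.mem_univ b)
  simpa [Set.univ_inter] using this

lemma evar_mono_eq {φ : ℝ → ℝ} {a b : ℝ} (hab : a ≤ b)
    (hm : MonotoneOn φ (Set.Icc a b)) :
    eVariationOn φ (Set.Icc a b) = ENNReal.ofReal (φ b - φ a) := by
  apply le_antisymm
  · have := hm.eVariationOn_le (Set.left_mem_Icc.2 hab) (Set.right_mem_Icc.2 hab)
    rwa [Set.inter_self] at this
  · have h := eVariationOn.edist_le φ (Set.right_mem_Icc.2 hab) (Set.left_mem_Icc.2 hab)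
    rwa [edist_dist, Real.dist_eq, abs_of_nonneg
      (sub_nonneg.2 (hm (Set.left_mem_Icc.2 hab) (Set.right_mem_Icc.2 hab) hab))] at h

lemma evar_anti_eq {φ : ℝ → ℝ} {a b : ℝ} (hab : a ≤ b)
    (hm : AntitoneOn φ (Set.Icc a b)) :
    eVariationOn φ (Set.Icc a b) = ENNReal.ofReal (φ a - φ b) := by
  apply le_antisymm
  · apply iSup_le
    rintro ⟨n, ⟨u, hu, us⟩⟩
    calc (∑ i ∈ Finset.range n, edist (φ (u (i + 1))) (φ (u i))) =
        ∑ i ∈ Finset.range n, ENNReal.ofReal (φ (u i) - φ (u (i+1))) := by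
          refine Finset.sum_congr rfl fun i _ => ?_
          rw [edist_dist, Real.dist_eq, abs_sub_comm, abs_of_nonneg]
          exact sub_nonneg.2 (hm (us i) (us (i+1)) (hu (Nat.le_succ _)))
      _ = ENNReal.ofReal (∑ i ∈ Finset.range n, (φ (u i) - φ (u (i+1)))) := by
          rw [ENNReal.ofReal_sum_of_nonneg]
          exact fun i _ => sub_nonneg.2 (hm (us i) (us (i+1)) (hu (Nat.le_succ _)))
      _ = ENNReal.ofReal (φ (u 0) - φ (u n)) := by
          congr 1
          have : ∀ m, ∑ i ∈ Finset.range m, (φ (u i) - φ (u (i+1))) = φ (u 0) - φ (u m) := by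
            intro m
            induction m with
            | zero => simp
            | succ k ih => rw [Finset.sum_range_succ, ih]; ring
          exact this n
      _ ≤ ENNReal.ofReal (φ a - φ b) := by
          apply ENNReal.ofReal_le_ofReal
          have h1 : φ (u 0) ≤ φ a := hm (Set.left_mem_Icc.2 hab) (us 0) (us 0).1
          have h2 : φ b ≤ φ (u n) := hm (us n) (Set.right_mem_Icc.2 hab) (us n).2
          linarith
  · have h := eVariationOn.edist_le φ (Set.left_mem_Icc.2 hab) (Set.right_mem_Icc.2 hab)
    rwa [edist_dist, Real.dist_eq, abs_of_nonneg
      (sub_nonneg.2 (hm (Set.left_mem_Icc.2 hab) (Set.right_mem_Icc.2 hab) hab))] at h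

lemma evar_add_le (φ ψ : ℝ → ℝ) (s : Set ℝ) :
    eVariationOn (fun x => φ x + ψ x) s ≤ eVariationOn φ s + eVariationOn ψ s := by
  apply iSup_le
  rintro ⟨n, ⟨u, hu, us⟩⟩
  calc (∑ i ∈ Finset.range n, edist (φ (u (i+1)) + ψ (u (i+1))) (φ (u i) + ψ (u i)))
      ≤ ∑ i ∈ Finset.range n,
          (edist (φ (u (i+1))) (φ (u i)) + edist (ψ (u (i+1))) (ψ (u i))) :=
        Finset.sum_le_sum (fun i _ => edist_add_add_le _ _ _ _)
    _ = (∑ i ∈ Finset.range n, edist (φ (u (i+1))) (φ (u i)))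
        + ∑ i ∈ Finset.range n, edist (ψ (u (i+1))) (ψ (u i)) := Finset.sum_add_distrib
    _ ≤ _ := add_le_add (eVariationOn.sum_le (f := φ) (n := n) hu us) (eVariationOn.sum_le (f := ψ) (n := n) hu us)

lemma evar_finset_sum_le {ι : Type*} (t : Finset ι) (F : ι → ℝ → ℝ) (s : Set ℝ) :
    eVariationOn (fun x => ∑ i ∈ t, F i x) s ≤ ∑ i ∈ t, eVariationOn (F i) s := by
  classical
  induction t using Finset.induction_on with
  | empty =>
    simp only [Finset.sum_empty]
    exact le_of_eq (eVariationOn.constant_on (by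
      rintro y ⟨x, -, rfl⟩ z ⟨x', -, rfl⟩; rfl))
  | insert a t' hni ih =>
    calc eVariationOn (fun x => ∑ i ∈ insert a t', F i x) s
        = eVariationOn (fun x => F a x + ∑ i ∈ t', F i x) s := by
          apply eVariationOn.eq_of_eqOn
          intro x _
          show (∑ i ∈ insert a t', F i x) = F a x + ∑ i ∈ t', F i x
          exact Finset.sum_insert hni
      _ ≤ eVariationOn (F a) s + eVariationOn (fun x => ∑ i ∈ t', F i x) s :=
          evar_add_le _ _ s
      _ ≤ eVariationOn (F a) s + ∑ i ∈ t', eVariationOn (F i) s := add_le_add_right ih _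
      _ = ∑ i ∈ insert a t', eVariationOn (F i) s := (Finset.sum_insert (f := fun i => eVariationOn (F i) s) hni).symm

lemma tent_mono_le_md {s : List Bool} {x y : ℝ} (hxy : x ≤ y) (hy : y ≤ md s) :
    tent s x ≤ tent s y := by
  have hx : x ≤ md s := le_trans hxy hy
  have h1 : |x - md s| = md s - x := by
    rw [abs_sub_comm, abs_of_nonneg (by linarith)]
  have h2 : |y - md s| = md s - y := by
    rw [abs_sub_comm, abs_of_nonneg (by linarith)]
  simp only [tent, h1, h2]
  apply max_le_max le_rfl
  have := mul_le_mul_of_nonneg_left (by linarith : md s - y ≤ md s - x) (le_of_lt (sl_pos s))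
  linarith

lemma tent_anti_ge_md {s : List Bool} {x y : ℝ} (hxy : x ≤ y) (hx : md s ≤ x) :
    tent s y ≤ tent s x := by
  have h1 : |x - md s| = x - md s := abs_of_nonneg (by linarith)
  have h2 : |y - md s| = y - md s := abs_of_nonneg (by linarith)
  simp only [tent, h1, h2]
  apply max_le_max le_rfl
  have := mul_le_mul_of_nonneg_left (by linarith : x - md s ≤ y - md s) (le_of_lt (sl_pos s))
  linarith

lemma evar_tent_le (s : List Bool) :
    eVariationOn (tent s) (Set.Icc (0:ℝ) 1) ≤ ENNReal.ofReal (2 * Ht s) := by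
  have h0 : (0:ℝ) ≤ md s := le_of_lt (md_pos s)
  have h1 : md s ≤ 1 := le_of_lt (md_lt_one s)
  rw [← evar_Icc_add (tent s) h0 h1]
  have hm : MonotoneOn (tent s) (Set.Icc 0 (md s)) :=
    fun x _ y hy hxy => tent_mono_le_md hxy hy.2
  have ha : AntitoneOn (tent s) (Set.Icc (md s) 1) :=
    fun x hx y _ hxy => tent_anti_ge_md hxy hx.1
  rw [evar_mono_eq h0 hm, evar_anti_eq h1 ha, tent_md]
  rw [← ENNReal.ofReal_add (by linarith [tent_nonneg s 0, Ht_pos s, tent_le s 0])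
    (by linarith [tent_nonneg s 1, Ht_pos s, tent_le s 1])]
  apply ENNReal.ofReal_le_ofReal
  linarith [tent_nonneg s 0, tent_nonneg s 1]

lemma evar_FL_le (n : ℕ) :
    eVariationOn (FL n) (Set.Icc (0:ℝ) 1) ≤ ENNReal.ofReal (((2:ℝ)⁻¹) ^ (n+1)) := by
  calc eVariationOn (FL n) (Set.Icc (0:ℝ) 1)
      ≤ ∑ s ∈ SF n, eVariationOn (tent s) (Set.Icc (0:ℝ) 1) :=
        evar_finset_sum_le (SF n) tent _
    _ ≤ ∑ s ∈ SF n, ENNReal.ofReal (2 * Ht s) :=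
        Finset.sum_le_sum (fun s _ => evar_tent_le s)
    _ = ENNReal.ofReal (∑ s ∈ SF n, 2 * Ht s) :=
        (ENNReal.ofReal_sum_of_nonneg (fun s _ => by linarith [Ht_pos s])).symm
    _ = ENNReal.ofReal (((2:ℝ)⁻¹) ^ (n+1)) := by
        congr 1
        have : ∀ s ∈ SF n, 2 * Ht s = 2 * ((4:ℝ)⁻¹) ^ (n+1) := by
          intro s hs
          rw [Ht, mem_SF.1 hs]
        rw [Finset.sum_congr rfl this, Finset.sum_const, card_SF, nsmul_eq_mul]
        push_cast
        have : ((2:ℝ))^n * (2 * ((4:ℝ)⁻¹)^(n+1)) = (2:ℝ)^(n+1) * ((4:ℝ)⁻¹)^(n+1) := by ring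
        rw [this, ← mul_pow]
        norm_num

lemma evar_partial_le (N : ℕ) :
    eVariationOn (fun x => ∑ n ∈ Finset.range N, FL n x) (Set.Icc (0:ℝ) 1)
      ≤ ENNReal.ofReal 1 := by
  calc eVariationOn (fun x => ∑ n ∈ Finset.range N, FL n x) (Set.Icc (0:ℝ) 1)
      ≤ ∑ n ∈ Finset.range N, eVariationOn (FL n) (Set.Icc (0:ℝ) 1) :=
        evar_finset_sum_le _ _ _
    _ ≤ ∑ n ∈ Finset.range N, ENNReal.ofReal (((2:ℝ)⁻¹) ^ (n+1)) :=
        Finset.sum_le_sum (fun n _ => evar_FL_le n)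
    _ = ENNReal.ofReal (∑ n ∈ Finset.range N, ((2:ℝ)⁻¹) ^ (n+1)) :=
        (ENNReal.ofReal_sum_of_nonneg (fun n _ => by positivity)).symm
    _ ≤ ENNReal.ofReal 1 := by
        apply ENNReal.ofReal_le_ofReal
        have h1 : ∀ n ∈ Finset.range N, ((2:ℝ)⁻¹) ^ (n+1) = ((1:ℝ)/2) ^ n * (1/2) := by
          intro n _
          rw [pow_succ]
          norm_num
        rw [Finset.sum_congr rfl h1, ← Finset.sum_mul]
        have := sum_geometric_two_le N
        linarith

lemma theF_evar_le : eVariationOn theF (Set.Icc (0:ℝ) 1) ≤ ENNReal.ofReal 1 := by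
  by_contra hcon
  push_neg at hcon
  have Ffs : ∀ x ∈ Set.Icc (0:ℝ) 1,
      Filter.Tendsto (fun N => ∑ n ∈ Finset.range N, FL n x) Filter.atTop (nhds (theF x)) :=
    fun x _ => (summable_FL x).hasSum.tendsto_sum_nat
  have := (eVariationOn.lowerSemicontinuous_aux Ffs hcon).exists
  rcases this with ⟨N, hN⟩
  exact absurd (evar_partial_le N) (not_le.2 hN)

lemma theF_BV : BoundedVariationOn theF (Set.Icc (0:ℝ) 1) :=
  fun h => absurd theF_evar_le (by rw [h]; simp)

lemma Icc_sub_unit {a b : ℝ} (ha : 0 ≤ a) (hb : b ≤ 1) : Set.Icc a b ⊆ Set.Icc (0:ℝ) 1 :=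
  fun x hx => ⟨le_trans ha hx.1, le_trans hx.2 hb⟩

lemma evar_fin {a b : ℝ} (ha : 0 ≤ a) (hb : b ≤ 1) :
    eVariationOn theF (Set.Icc a b) ≠ ⊤ := by
  intro h
  apply theF_BV
  have := eVariationOn.mono theF (Icc_sub_unit ha hb)
  rw [h] at this
  exact top_le_iff.1 this

lemma vfn_theF_add {a b c : ℝ} (ha : 0 ≤ a) (hab : a ≤ b) (hbc : b ≤ c) (hc : c ≤ 1) :
    vfn theF a c = vfn theF a b + (eVariationOn theF (Set.Icc b c)).toReal := by
  rw [vfn, vfn, ← evar_Icc_add theF hab hbc]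
  rw [ENNReal.toReal_add (evar_fin ha (by linarith)) (evar_fin (by linarith) hc)]

lemma vfn_theF_mono {a b c : ℝ} (ha : 0 ≤ a) (hab : a ≤ b) (hbc : b ≤ c) (hc : c ≤ 1) :
    vfn theF a b ≤ vfn theF a c := by
  rw [vfn_theF_add ha hab hbc hc]
  exact le_add_of_nonneg_right ENNReal.toReal_nonneg

lemma vfn_nonneg (a x : ℝ) : 0 ≤ vfn theF a x := ENNReal.toReal_nonneg

/-! ### Arc-length parametrization lemmas -/

lemma hasC2_of_monotone {c d : ℝ} (h0 : 0 ≤ c) (hcd : c ≤ d) (h1 : d ≤ 1)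
    (hm : MonotoneOn theF (Set.Icc c d)) : HasC2ArcLengthParam theF c d := by
  have hvfn : ∀ x ∈ Set.Icc c d, vfn theF c x = theF x - theF c := by
    intro x hx
    rw [vfn, evar_mono_eq hx.1 (hm.mono (Set.Icc_subset_Icc le_rfl hx.2)),
      ENNReal.toReal_ofReal (sub_nonneg.2 (hm (Set.left_mem_Icc.2 hcd) hx hx.1))]
  refine ⟨evar_fin h0 h1, fun t => t + theF c, ⟨fun _ => 1, fun _ => 0, ?_, ?_⟩, ?_⟩
  · exact fun x _ => (hasDerivWithinAt_id x _).add_const _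
  · exact fun x _ => hasDerivWithinAt_const _ _ _
  · intro x hx
    rw [hvfn x hx]
    ring

lemma hasC2_of_antitone {c d : ℝ} (h0 : 0 ≤ c) (hcd : c ≤ d) (h1 : d ≤ 1)
    (hm : AntitoneOn theF (Set.Icc c d)) : HasC2ArcLengthParam theF c d := by
  have hvfn : ∀ x ∈ Set.Icc c d, vfn theF c x = theF c - theF x := by
    intro x hx
    rw [vfn, evar_anti_eq hx.1 (hm.mono (Set.Icc_subset_Icc le_rfl hx.2)),
      ENNReal.toReal_ofReal (sub_nonneg.2 (hm (Set.left_mem_Icc.2 hcd) hx hx.1))]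
  refine ⟨evar_fin h0 h1, fun t => theF c - t, ⟨fun _ => -1, fun _ => 0, ?_, ?_⟩, ?_⟩
  · intro x hx
    simpa using (hasDerivWithinAt_id x (Set.Icc 0 (vfn theF c d))).const_sub (theF c)
  · exact fun x _ => hasDerivWithinAt_const _ _ _
  · intro x hx
    rw [hvfn x hx]
    ring

/-- The corner argument: no interval `[A,B] ⊆ [0,1]` whose interior contains the peak `md s`
admits a twice differentiable arc-length parametrization. -/
lemma no_corner (s : List Bool) {A B : ℝ} (hA0 : 0 ≤ A) (hB1 : B ≤ 1)
    (hAm : A < md s) (hmB : md s < B) : ¬ HasC2ArcLengthParam theF A B := by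
  rintro ⟨hBVAB, g, ⟨g', g'', hg1, -⟩, hgf⟩
  set u' := max A (uu s) with hu'def
  set w' := min B (ww s) with hw'def
  have hu'A : A ≤ u' := le_max_left _ _
  have hu'u : uu s ≤ u' := le_max_right _ _
  have hu'lt : u' < md s := max_lt hAm (uu_lt_md s)
  have hw'gt : md s < w' := lt_min hmB (md_lt_ww s)
  have hw'B : w' ≤ B := min_le_left _ _
  have hw'w : w' ≤ ww s := min_le_right _ _
  have hAB : A ≤ B := le_trans (le_of_lt hAm) (le_of_lt hmB)
  have hmd01 : md s ∈ Set.Icc A B := ⟨le_of_lt hAm, le_of_lt hmB⟩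
  set tstar := sl s * min (md s - u') (w' - md s) with htstardef
  have hminpos : 0 < min (md s - u') (w' - md s) := lt_min (by linarith) (by linarith)
  have htpos : 0 < tstar := mul_pos (sl_pos s) hminpos
  set V := vfn theF A with hVdef
  set VB := vfn theF A B with hVBdef
  -- properties of the points x_t (left) and y_t (right)
  have hdiv : ∀ t : ℝ, 0 < t → t ≤ tstar → t / sl s ≤ min (md s - u') (w' - md s) := by
    intro t ht hts
    rw [div_le_iff₀ (sl_pos s)]
    calc t ≤ tstar := hts
    _ = min (md s - u') (w' - md s) * sl s := by rw [htstardef]; ring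
  have hxmem : ∀ t : ℝ, 0 < t → t ≤ tstar →
      md s - t / sl s ∈ Set.Icc (uu s) (md s) ∧ md s - t / sl s ∈ Set.Icc A B := by
    intro t ht hts
    have h1 := hdiv t ht hts
    have h2 : t / sl s ≤ md s - u' := le_trans h1 (min_le_left _ _)
    have h3 : 0 < t / sl s := div_pos ht (sl_pos s)
    exact ⟨⟨by linarith, by linarith⟩, ⟨by linarith, by linarith⟩⟩
  have hymem : ∀ t : ℝ, 0 < t → t ≤ tstar →
      md s + t / sl s ∈ Set.Icc (md s) (ww s) ∧ md s + t / sl s ∈ Set.Icc A B := by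
    intro t ht hts
    have h1 := hdiv t ht hts
    have h2 : t / sl s ≤ w' - md s := le_trans h1 (min_le_right _ _)
    have h3 : 0 < t / sl s := div_pos ht (sl_pos s)
    exact ⟨⟨by linarith, by linarith⟩, ⟨by linarith, by linarith⟩⟩
  have hfx : ∀ t : ℝ, 0 < t → t ≤ tstar → theF (md s - t / sl s) = Ht s - t := by
    intro t ht hts
    have hx := (hxmem t ht hts).1
    have hx' : md s - t / sl s ∈ Set.Icc (uu s) (ww s) :=
      ⟨hx.1, le_trans hx.2 (le_of_lt (md_lt_ww s))⟩
    rw [theF_eqOn_gap s hx', tent_eq_left hx]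
    have : sl s * (md s - (md s - t / sl s)) = t := by
      field_simp
      rw [sub_sub_cancel]; field_simp [(sl_pos s).ne']
    rw [this]
  have hfy : ∀ t : ℝ, 0 < t → t ≤ tstar → theF (md s + t / sl s) = Ht s - t := by
    intro t ht hts
    have hy := (hymem t ht hts).1
    have hy' : md s + t / sl s ∈ Set.Icc (uu s) (ww s) :=
      ⟨le_trans (le_of_lt (uu_lt_md s)) hy.1, hy.2⟩
    rw [theF_eqOn_gap s hy', tent_eq_right hy]
    have : sl s * (md s + t / sl s - md s) = t := by
      field_simp
      rw [add_sub_cancel_left]; field_simp [(sl_pos s).ne']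
    rw [this]
  have hVx : ∀ t : ℝ, 0 < t → t ≤ tstar → V (md s - t / sl s) = V (md s) - t := by
    intro t ht hts
    have hx := (hxmem t ht hts)
    have hadd := vfn_theF_add (a := A) (b := md s - t / sl s) (c := md s)
      hA0 hx.2.1 hx.1.2 (le_trans (le_of_lt hmB) hB1)
    have hev : eVariationOn theF (Set.Icc (md s - t / sl s) (md s)) = ENNReal.ofReal t := by
      rw [evar_mono_eq hx.1.2 ((theF_monoOn s).mono (Set.Icc_subset_Icc hx.1.1 le_rfl)),
        theF_md, hfx t ht hts]
      norm_num
    rw [hev, ENNReal.toReal_ofReal (le_of_lt ht)] at hadd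
    rw [hVdef] at *
    linarith [hadd]
  have hVy : ∀ t : ℝ, 0 < t → t ≤ tstar → V (md s + t / sl s) = V (md s) + t := by
    intro t ht hts
    have hy := (hymem t ht hts)
    have hadd := vfn_theF_add (a := A) (b := md s) (c := md s + t / sl s)
      hA0 hmd01.1 hy.1.1 (le_trans hy.2.2 hB1)
    have hev : eVariationOn theF (Set.Icc (md s) (md s + t / sl s)) = ENNReal.ofReal t := by
      rw [evar_anti_eq hy.1.1 ((theF_antiOn s).mono (Set.Icc_subset_Icc le_rfl hy.1.2)),
        theF_md, hfy t ht hts]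
      norm_num
    rw [hev, ENNReal.toReal_ofReal (le_of_lt ht)] at hadd
    rw [hVdef] at *
    linarith [hadd]
  -- g-values near s₀ := V (md s)
  have hgmd : g (V (md s)) = Ht s := by
    have := hgf (md s) hmd01
    rwa [theF_md] at this
  have hgx : ∀ t : ℝ, 0 < t → t ≤ tstar → g (V (md s) - t) = Ht s - t := by
    intro t ht hts
    have := hgf (md s - t / sl s) (hxmem t ht hts).2
    rwa [hVx t ht hts, hfx t ht hts] at this
  have hgy : ∀ t : ℝ, 0 < t → t ≤ tstar → g (V (md s) + t) = Ht s - t := by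
    intro t ht hts
    have := hgf (md s + t / sl s) (hymem t ht hts).2
    rwa [hVy t ht hts, hfy t ht hts] at this
  have hs0mem : V (md s) ∈ Set.Icc 0 VB :=
    ⟨vfn_nonneg A (md s), vfn_theF_mono hA0 hmd01.1 hmd01.2 hB1⟩
  have hyVB : ∀ t : ℝ, 0 < t → t ≤ tstar → V (md s) + t ≤ VB := by
    intro t ht hts
    rw [← hVy t ht hts]
    exact vfn_theF_mono hA0 (le_trans hmd01.1 (le_of_lt (by
      have := div_pos ht (sl_pos s); linarith))) (le_trans (hymem t ht hts).2.2 le_rfl)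
      hB1 |>.trans_eq rfl
  have hxV0 : ∀ t : ℝ, 0 < t → t ≤ tstar → 0 ≤ V (md s) - t := by
    intro t ht hts
    rw [← hVx t ht hts]
    exact vfn_nonneg A _
  -- the derivative of g at s₀
  have hder := hg1 (V (md s)) hs0mem
  rw [hasDerivWithinAt_iff_tendsto_slope] at hder
  -- sequence of scales
  set tk : ℕ → ℝ := fun k => tstar / (k + 1) with htkdef
  have htk : ∀ k : ℕ, 0 < tk k ∧ tk k ≤ tstar := by
    intro k
    constructor
    · apply div_pos htpos
      positivity
    · apply div_le_self (le_of_lt htpos)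
      have : (1:ℝ) ≤ (k:ℝ) + 1 := by
        have : (0:ℝ) ≤ (k:ℝ) := Nat.cast_nonneg k
        linarith
      exact this
  have htk0 : Filter.Tendsto tk Filter.atTop (nhds 0) := by
    have h1 : Filter.Tendsto (fun k : ℕ => ((k:ℝ) + 1)) Filter.atTop Filter.atTop :=
      Filter.tendsto_atTop_add_const_right _ 1 tendsto_natCast_atTop_atTop
    simpa using Filter.Tendsto.div_atTop (tendsto_const_nhds (x := tstar)) h1
  -- right sequence: slope ≡ -1
  have hright : Filter.Tendsto (fun k => V (md s) + tk k) Filter.atTop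
      (nhdsWithin (V (md s)) (Set.Icc 0 VB \ {V (md s)})) := by
    rw [tendsto_nhdsWithin_iff]
    constructor
    · simpa using tendsto_const_nhds.add htk0
    · apply Filter.Eventually.of_forall
      intro k
      refine ⟨⟨?_, hyVB (tk k) (htk k).1 (htk k).2⟩, ?_⟩
      · linarith [hs0mem.1, (htk k).1]
      · simp only [Set.mem_singleton_iff]
        exact ne_of_gt (by linarith [(htk k).1])
  have hgm1 : g' (V (md s)) = -1 := by
    have h1 : Filter.Tendsto (fun k => slope g (V (md s)) (V (md s) + tk k)) Filter.atTop
        (nhds (g' (V (md s)))) := hder.comp hright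
    have h2 : (fun k => slope g (V (md s)) (V (md s) + tk k)) = fun _ : ℕ => (-1:ℝ) := by
      funext k
      have hk1 := (htk k).1
      rw [slope_def_field, hgy (tk k) (htk k).1 (htk k).2, hgmd]
      have hnum : Ht s - tk k - Ht s = -tk k := by ring
      have hden : V (md s) + tk k - V (md s) = tk k := by ring
      rw [hnum, hden, neg_div, div_self (ne_of_gt hk1)]
    rw [h2] at h1
    exact tendsto_nhds_unique h1 tendsto_const_nhds
  -- left sequence: slope ≡ 1
  have hleft : Filter.Tendsto (fun k => V (md s) - tk k) Filter.atTop
      (nhdsWithin (V (md s)) (Set.Icc 0 VB \ {V (md s)})) := by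
    rw [tendsto_nhdsWithin_iff]
    constructor
    · simpa using tendsto_const_nhds.sub htk0
    · apply Filter.Eventually.of_forall
      intro k
      refine ⟨⟨hxV0 (tk k) (htk k).1 (htk k).2, ?_⟩, ?_⟩
      · linarith [hs0mem.2, (htk k).1]
      · simp only [Set.mem_singleton_iff]
        exact ne_of_lt (by linarith [(htk k).1])
  have hgp1 : g' (V (md s)) = 1 := by
    have h1 : Filter.Tendsto (fun k => slope g (V (md s)) (V (md s) - tk k)) Filter.atTop
        (nhds (g' (V (md s)))) := hder.comp hleft
    have h2 : (fun k => slope g (V (md s)) (V (md s) - tk k)) = fun _ : ℕ => (1:ℝ) := by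
      funext k
      have hk1 := (htk k).1
      rw [slope_def_field, hgx (tk k) (htk k).1 (htk k).2, hgmd]
      have hnum : Ht s - tk k - Ht s = -tk k := by ring
      have hden : V (md s) - tk k - V (md s) = -tk k := by ring
      rw [hnum, hden, neg_div_neg_eq, div_self (ne_of_gt hk1)]
    rw [h2] at h1
    exact tendsto_nhds_unique h1 tendsto_const_nhds
  rw [hgm1] at hgp1
  norm_num at hgp1

/-! ### Characterization of the set of varying monotonicity -/

/-- The peaks of the tents. -/
def PK : Set ℝ := {y | ∃ s : List Bool, y = md s}

lemma basic_in_interval {x A B : ℝ} (hxCC : x ∈ Set.Icc (0:ℝ) 1)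
    (hAx : A ≤ x) (hxB : x ≤ B) (hA : A < x ∨ x = 0) (hB : x < B ∨ x = 1)
    (happrox : ∀ n : ℕ, ∃ s : List Bool, s.length = n ∧ x ∈ basic s) :
    ∃ s : List Bool, x ∈ basic s ∧ A ≤ Lx s ∧ Rx s ≤ B := by
  set δ : ℝ := min (if 0 < x - A then x - A else 1) (if 0 < B - x then B - x else 1) with hδdef
  have hδpos : 0 < δ := by
    apply lt_min <;> split <;> first | assumption | norm_num
  obtain ⟨n, hn⟩ : ∃ n : ℕ, ((3:ℝ)⁻¹) ^ n < δ :=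
    exists_pow_lt_of_lt_one hδpos (by norm_num)
  obtain ⟨s, hslen, hxs⟩ := happrox n
  have hpow : ((3:ℝ)⁻¹) ^ s.length < δ := by rwa [hslen]
  refine ⟨s, hxs, ?_, ?_⟩
  · rcases hA with hA | hA
    · have h1 : δ ≤ x - A := le_trans (min_le_left _ _) (le_of_eq (if_pos (by linarith)))
      have h2 : x ≤ Lx s + ((3:ℝ)⁻¹) ^ s.length := hxs.2
      linarith
    · subst hA
      have := hxs.1
      linarith [Lx_nonneg s, hAx]
  · rcases hB with hB | hB
    · have h1 : δ ≤ B - x := le_trans (min_le_right _ _) (le_of_eq (if_pos (by linarith)))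
      have h2 : Lx s ≤ x := hxs.1
      simp only [Rx]
      linarith
    · subst hB
      have := Rx_le_one s
      simp only [Rx]
      linarith

lemma uu_le_Rx (s : List Bool) : uu s ≤ Rx s := by
  simp only [uu, Rx, pow_len_eq]
  linarith [Wd_pos s]

lemma ww_le_Rx (s : List Bool) : ww s ≤ Rx s := by
  simp only [ww, Rx, pow_len_eq]
  linarith [Wd_pos s]

lemma CC_subset_Kset : CC ⊆ Kset theF 0 1 := by
  intro x hx
  have hx01 : x ∈ Set.Icc (0:ℝ) 1 := CC_subset_Icc hx
  refine ⟨hx01, ?_⟩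
  rintro ⟨c, d, hc, hd, H⟩
  set A := max c 0 with hAdef
  set B := min d 1 with hBdef
  have hA0 : 0 ≤ A := le_max_right _ _
  have hB1 : B ≤ 1 := min_le_right _ _
  have hAx : A ≤ x := max_le (le_of_lt hc) hx01.1
  have hxB : x ≤ B := le_min (le_of_lt hd) hx01.2
  have hA' : A < x ∨ x = 0 := by
    rcases eq_or_lt_of_le hx01.1 with h | h
    · exact Or.inr h.symm
    · exact Or.inl (max_lt hc h)
  have hB' : x < B ∨ x = 1 := by
    rcases eq_or_lt_of_le hx01.2 with h | h
    · exact Or.inr h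
    · exact Or.inl (lt_min hd h)
  obtain ⟨s, hxs, hLA, hRB⟩ :=
    basic_in_interval hx01 hAx hxB hA' hB' (fun n => CC_approx hx n)
  have huu : uu s ∈ Set.Icc A B := by
    constructor
    · calc A ≤ Lx s := hLA
      _ ≤ uu s := by simp only [uu]; linarith [Wd_pos s]
    · exact le_trans (uu_le_Rx s) hRB
  have hmd : md s ∈ Set.Icc A B := by
    constructor
    · calc A ≤ Lx s := hLA
      _ ≤ md s := by simp only [md]; linarith [Wd_pos s]
    · calc md s ≤ ww s := le_of_lt (md_lt_ww s)
      _ ≤ B := le_trans (ww_le_Rx s) hRB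
  rcases H with H | H
  · have h1 := H (uu s) huu (md s) hmd
    rw [theF_uu, theF_md] at h1
    exact absurd h1.symm (ne_of_gt (Ht_pos s))
  · refine absurd H (no_corner s hA0 hB1 ?_ ?_)
    · calc A ≤ Lx s := hLA
      _ < md s := by simp only [md]; linarith [Wd_pos s]
    · calc md s < ww s := md_lt_ww s
      _ ≤ B := le_trans (ww_le_Rx s) hRB

lemma PK_subset_Kset : PK ⊆ Kset theF 0 1 := by
  rintro x ⟨s, rfl⟩
  have hmd01 : md s ∈ Set.Icc (0:ℝ) 1 := ⟨le_of_lt (md_pos s), le_of_lt (md_lt_one s)⟩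
  refine ⟨hmd01, ?_⟩
  rintro ⟨c, d, hc, hd, H⟩
  set A := max c 0 with hAdef
  set B := min d 1 with hBdef
  have hA0 : 0 ≤ A := le_max_right _ _
  have hB1 : B ≤ 1 := min_le_right _ _
  have hAmd : A < md s := max_lt hc (md_pos s)
  have hmdB : md s < B := lt_min hd (md_lt_one s)
  rcases H with H | H
  · -- constancy is violated
    set q := (max A (uu s) + md s) / 2 with hqdef
    have hu'lt : max A (uu s) < md s := max_lt hAmd (uu_lt_md s)
    have hq1 : uu s ≤ q := by
      have := le_max_right A (uu s)
      rw [hqdef]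
      linarith [uu_lt_md s]
    have hq2 : q < md s := by rw [hqdef]; linarith
    have hqA : A ≤ q := by
      have := le_max_left A (uu s)
      rw [hqdef]
      linarith
    have hqB : q ≤ B := by rw [hqdef]; linarith
    have h1 := H q ⟨hqA, hqB⟩ (md s) ⟨le_of_lt hAmd, le_of_lt hmdB⟩
    have hqIcc : q ∈ Set.Icc (uu s) (md s) := ⟨hq1, le_of_lt hq2⟩
    have hqval : theF q = Ht s - sl s * (md s - q) := by
      rw [theF_eqOn_gap s ⟨hq1, le_trans (le_of_lt hq2) (le_of_lt (md_lt_ww s))⟩,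
        tent_eq_left hqIcc]
    rw [hqval, theF_md] at h1
    nlinarith [sl_pos s, hq2]
  · exact no_corner s hA0 hB1 hAmd hmdB H

lemma Kset_subset : Kset theF 0 1 ⊆ CC ∪ PK := by
  rintro x ⟨hx01, hnot⟩
  by_contra hxn
  have hxCC : x ∉ CC := fun h => hxn (Or.inl h)
  have hxPK : x ∉ PK := fun h => hxn (Or.inr h)
  obtain ⟨s, hxg⟩ := exists_gap hx01 hxCC
  have hxmd : x ≠ md s := fun h => hxPK ⟨s, h⟩
  have huupos : 0 ≤ uu s := uu_nonneg s
  rcases lt_or_gt_of_ne hxmd with hlt | hgt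
  · set c := (uu s + x) / 2 with hcdef
    set d := (x + md s) / 2 with hddef
    have hc : c < x := by rw [hcdef]; linarith [hxg.1]
    have hd : x < d := by rw [hddef]; linarith
    have hc0 : 0 ≤ c := by rw [hcdef]; linarith [hxg.1]
    have hd1 : d ≤ 1 := by
      rw [hddef]
      linarith [md_lt_one s, hx01.2]
    apply hnot
    refine ⟨c, d, hc, hd, Or.inr ?_⟩
    rw [max_eq_left hc0, min_eq_left hd1]
    apply hasC2_of_monotone hc0 (by linarith) hd1
    apply (theF_monoOn s).mono
    apply Set.Icc_subset_Icc
    · rw [hcdef]; linarith [hxg.1]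
    · rw [hddef]; linarith
  · set c := (md s + x) / 2 with hcdef
    set d := (x + ww s) / 2 with hddef
    have hc : c < x := by rw [hcdef]; linarith
    have hd : x < d := by rw [hddef]; linarith [hxg.2]
    have hc0 : 0 ≤ c := by rw [hcdef]; linarith [md_pos s, hx01.1]
    have hd1 : d ≤ 1 := by
      rw [hddef]
      linarith [ww_le_one s, hx01.2]
    apply hnot
    refine ⟨c, d, hc, hd, Or.inr ?_⟩
    rw [max_eq_left hc0, min_eq_left hd1]
    apply hasC2_of_antitone hc0 (by linarith) hd1
    apply (theF_antiOn s).mono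
    apply Set.Icc_subset_Icc
    · rw [hcdef]; linarith
    · rw [hddef]; linarith [hxg.2]

lemma Kset_eq : Kset theF 0 1 = CC ∪ PK :=
  le_antisymm Kset_subset (Set.union_subset CC_subset_Kset PK_subset_Kset)

/-! ### Fractional variation lemmas -/

lemma fracVar_le_of_const {α : ℝ} (hα : α ≠ 0) {g : ℝ → ℝ} {K : Set ℝ}
    (hg : ∀ x ∈ K, ∀ y ∈ K, g x = g y) : fracVar α g K = 0 := by
  apply le_antisymm _ zero_le
  apply iSup_le; intro m
  apply iSup_le; intro p
  apply iSup_le; intro h1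
  apply iSup_le; intro _
  apply le_of_eq
  apply Finset.sum_eq_zero
  intro i _
  rw [hg _ (h1 i).2.1 _ (h1 i).1, sub_self, abs_zero, Real.zero_rpow hα]
  simp

lemma fracVar_lt_top_of_const {α : ℝ} (hα : α ≠ 0) {g : ℝ → ℝ} {K : Set ℝ}
    (hg : ∀ x ∈ K, ∀ y ∈ K, g x = g y) : fracVar α g K < ⊤ := by
  rw [fracVar_le_of_const hα hg]
  simp

lemma fracVar_ge_finset (α : ℝ) (g : ℝ → ℝ) (K : Set ℝ) (U : Finset ℝ) (r : ℝ → ℝ)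
    (h1 : ∀ u ∈ U, u ∈ K ∧ r u ∈ K ∧ u ≤ r u)
    (h2 : ∀ u ∈ U, ∀ v ∈ U, u < v → r u ≤ v) :
    (∑ u ∈ U, ENNReal.ofReal (|g (r u) - g u| ^ α)) ≤ fracVar α g K := by
  classical
  set m := U.card with hm
  set e := U.orderIsoOfFin rfl with he
  set p : Fin m → ℝ × ℝ := fun i => ((e i : ℝ), r (e i)) with hp
  have hp1 : ∀ i, (p i).1 ∈ K ∧ (p i).2 ∈ K ∧ (p i).1 ≤ (p i).2 := fun i => h1 _ (e i).2
  have hp2 : ∀ i j, i < j → (p i).2 ≤ (p j).1 := by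
    intro i j hij
    have : (e i : ℝ) < (e j : ℝ) := by
      have := e.strictMono hij
      exact_mod_cast this
    exact h2 _ (e i).2 _ (e j).2 this
  have hsum : (∑ i, ENNReal.ofReal (|g (p i).2 - g (p i).1| ^ α))
      = ∑ u ∈ U, ENNReal.ofReal (|g (r u) - g u| ^ α) := by
    rw [← Finset.sum_coe_sort U (fun u => ENNReal.ofReal (|g (r u) - g u| ^ α))]
    exact Fintype.sum_equiv e.toEquiv _ _ (fun i => rfl)
  calc (∑ u ∈ U, ENNReal.ofReal (|g (r u) - g u| ^ α))
      = ∑ i, ENNReal.ofReal (|g (p i).2 - g (p i).1| ^ α) := hsum.symm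
    _ ≤ fracVar α g K :=
        le_iSup_of_le m (le_iSup_of_le p (le_iSup_of_le hp1 (le_iSup_of_le hp2 le_rfl)))

/-! ### The variation function jumps across gaps -/

lemma uu_mem_basic (t : List Bool) : uu t ∈ basic t := by
  constructor
  · simp only [uu]; linarith [Wd_pos t]
  · rw [pow_len_eq]; simp only [uu]; linarith [Wd_pos t]

lemma ww_mem_basic (t : List Bool) : ww t ∈ basic t := by
  constructor
  · simp only [ww]; linarith [Wd_pos t]
  · rw [pow_len_eq]; simp only [ww]; linarith [Wd_pos t]

lemma uu_inj {t1 t2 : List Bool} (h : uu t1 = uu t2) : t1 = t2 := by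
  set z := (uu t1 + min (ww t1) (ww t2)) / 2 with hz
  have h1 : uu t1 < ww t1 := lt_trans (uu_lt_md t1) (md_lt_ww t1)
  have h2 : uu t2 < ww t2 := lt_trans (uu_lt_md t2) (md_lt_ww t2)
  have hmin : uu t1 < min (ww t1) (ww t2) := lt_min h1 (h ▸ h2)
  have hz1 : z ∈ gap t1 := by
    constructor
    · rw [hz]; linarith
    · rw [hz]; have := min_le_left (ww t1) (ww t2); linarith
  have hz2 : z ∈ gap t2 := by
    constructor
    · rw [hz, ← h]; linarith
    · rw [hz]; have := min_le_right (ww t1) (ww t2); linarith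
  exact gap_eq_of_mem hz1 hz2

open Classical in
/-- The right endpoint of the gap whose left endpoint is `x` (junk value otherwise). -/
noncomputable def gapR (x : ℝ) : ℝ :=
  if h : ∃ t : List Bool, uu t = x then ww h.choose else x

lemma gapR_uu (t : List Bool) : gapR (uu t) = ww t := by
  have h : ∃ t' : List Bool, uu t' = uu t := ⟨t, rfl⟩
  unfold gapR
  rw [dif_pos h]
  congr 1
  exact uu_inj h.choose_spec

lemma vfn_jump (t : List Bool) :
    vfn theF 0 (ww t) - vfn theF 0 (uu t) = 2 * Ht t := by
  have huw : uu t ≤ ww t := le_of_lt (lt_trans (uu_lt_md t) (md_lt_ww t))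
  have hadd := vfn_theF_add (a := 0) (b := uu t) (c := ww t) le_rfl (uu_nonneg t) huw
    (ww_le_one t)
  have hev : eVariationOn theF (Set.Icc (uu t) (ww t)) = ENNReal.ofReal (2 * Ht t) := by
    rw [← evar_Icc_add theF (le_of_lt (uu_lt_md t)) (le_of_lt (md_lt_ww t)),
      evar_mono_eq (le_of_lt (uu_lt_md t)) (theF_monoOn t),
      evar_anti_eq (le_of_lt (md_lt_ww t)) (theF_antiOn t),
      theF_md, theF_uu, theF_ww]
    rw [← ENNReal.ofReal_add (by linarith [Ht_pos t]) (by linarith [Ht_pos t])]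
    congr 1
    ring
  rw [hadd, hev, ENNReal.toReal_ofReal (by linarith [Ht_pos t])]
  ring

lemma jump_term_ge (t : List Bool) :
    ENNReal.ofReal (((2:ℝ)⁻¹) ^ (t.length + 1))
      ≤ ENNReal.ofReal (|vfn theF 0 (ww t) - vfn theF 0 (uu t)| ^ ((1:ℝ)/2)) := by
  apply ENNReal.ofReal_le_ofReal
  rw [vfn_jump t, abs_of_nonneg (by linarith [Ht_pos t])]
  set a : ℝ := ((2:ℝ)⁻¹) ^ (t.length + 1) with ha
  have ha0 : 0 ≤ a := by positivity
  have hsq : a ^ (2:ℕ) ≤ 2 * Ht t := by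
    rw [ha, Ht, ← pow_mul]
    have h1 : ((2:ℝ)⁻¹) ^ ((t.length + 1) * 2) = ((4:ℝ)⁻¹) ^ (t.length + 1) := by
      rw [mul_comm (t.length + 1) 2, pow_mul]
      norm_num
    rw [h1]
    nlinarith [Ht_pos t, (by rw [Ht] : Ht t = ((4:ℝ)⁻¹) ^ (t.length + 1))]
  calc a = (a ^ (2:ℕ)) ^ ((1:ℝ)/2) := by
        rw [← Real.rpow_natCast a 2, ← Real.rpow_mul ha0]
        norm_num
  _ ≤ (2 * Ht t) ^ ((1:ℝ)/2) :=
        Real.rpow_le_rpow (by positivity) hsq (by norm_num)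

/-- Inside any basic interval, the 1/2-variation of `vfn theF 0` is infinite on any
set containing the Cantor points of that interval. -/
lemma fracVar_vfn_top (S : List Bool) (K : Set ℝ)
    (hK : ∀ y ∈ CC, y ∈ basic S → y ∈ K) :
    fracVar (1/2) (vfn theF 0) K = ⊤ := by
  classical
  set c : ℝ := ((2:ℝ)⁻¹) ^ (S.length + 1) with hc
  have hcpos : 0 < c := by positivity
  have key : ∀ N : ℕ, (N : ℝ≥0∞) * ENNReal.ofReal c ≤ fracVar (1/2) (vfn theF 0) K := by
    intro N
    set T : Finset (List Bool) := (Finset.range N).biUnion (fun j => SF j) with hT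
    set U : Finset ℝ := T.image (fun r => uu (S ++ r)) with hU
    have hinj : ∀ r1 ∈ T, ∀ r2 ∈ T, uu (S ++ r1) = uu (S ++ r2) → r1 = r2 := by
      intro r1 _ r2 _ h
      exact List.append_cancel_left (uu_inj h)
    -- memberships
    have hmemK : ∀ t : List Bool, (∃ r ∈ T, S ++ r = t) → uu t ∈ K ∧ ww t ∈ K := by
      rintro t ⟨r, -, rfl⟩
      constructor
      · exact hK _ (uu_mem_CC _) (basic_append_subset S r (uu_mem_basic _))
      · exact hK _ (ww_mem_CC _) (basic_append_subset S r (ww_mem_basic _))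
    have h1 : ∀ u ∈ U, u ∈ K ∧ gapR u ∈ K ∧ u ≤ gapR u := by
      intro u hu
      rcases Finset.mem_image.1 hu with ⟨r, hr, rfl⟩
      rcases hmemK _ ⟨r, hr, rfl⟩ with ⟨hu1, hu2⟩
      rw [gapR_uu]
      exact ⟨hu1, hu2, le_of_lt (lt_trans (uu_lt_md _) (md_lt_ww _))⟩
    have h2 : ∀ u ∈ U, ∀ v ∈ U, u < v → gapR u ≤ v := by
      intro u hu v hv huv
      rcases Finset.mem_image.1 hu with ⟨r1, hr1, rfl⟩
      rcases Finset.mem_image.1 hv with ⟨r2, hr2, rfl⟩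
      rw [gapR_uu]
      by_contra hcon
      push_neg at hcon
      exact gap_disjoint_CC (S ++ r1) (uu (S ++ r2)) ⟨huv, hcon⟩ (uu_mem_CC _)
    have hge := fracVar_ge_finset (1/2) (vfn theF 0) K U gapR h1 h2
    refine le_trans ?_ hge
    -- compute the sum from below
    have hsum1 : (∑ u ∈ U, ENNReal.ofReal (|vfn theF 0 (gapR u) - vfn theF 0 u| ^ ((1:ℝ)/2)))
        = ∑ r ∈ T, ENNReal.ofReal
            (|vfn theF 0 (ww (S ++ r)) - vfn theF 0 (uu (S ++ r))| ^ ((1:ℝ)/2)) := by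
      rw [hU, Finset.sum_image hinj]
      refine Finset.sum_congr rfl (fun r _ => ?_)
      rw [gapR_uu]
    rw [hsum1]
    have hdisj : ∀ j1 ∈ Finset.range N, ∀ j2 ∈ Finset.range N, j1 ≠ j2 →
        Disjoint (SF j1) (SF j2) := by
      intro j1 _ j2 _ hne
      rw [Finset.disjoint_left]
      intro a ha1 ha2
      exact hne ((mem_SF.1 ha1).symm.trans (mem_SF.1 ha2))
    rw [hT, Finset.sum_biUnion hdisj]
    have hinner : ∀ j ∈ Finset.range N,
        ENNReal.ofReal c ≤ ∑ r ∈ SF j, ENNReal.ofReal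
          (|vfn theF 0 (ww (S ++ r)) - vfn theF 0 (uu (S ++ r))| ^ ((1:ℝ)/2)) := by
      intro j _
      calc ENNReal.ofReal c
          = ∑ r ∈ SF j, ENNReal.ofReal (((2:ℝ)⁻¹) ^ ((S ++ r).length + 1)) := by
            have hval : ∀ r ∈ SF j, ENNReal.ofReal (((2:ℝ)⁻¹) ^ ((S ++ r).length + 1))
                = ENNReal.ofReal (((2:ℝ)⁻¹) ^ (S.length + j + 1)) := by
              intro r hr
              rw [List.length_append, mem_SF.1 hr]
            rw [Finset.sum_congr rfl hval, Finset.sum_const, card_SF, nsmul_eq_mul]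
            rw [← ENNReal.ofReal_natCast (2^j), ← ENNReal.ofReal_mul (by positivity)]
            congr 1
            push_cast
            rw [hc]
            have : ((2:ℝ)) ^ j * ((2:ℝ)⁻¹) ^ (S.length + j + 1) = ((2:ℝ)⁻¹) ^ (S.length + 1) := by
              rw [show S.length + j + 1 = j + (S.length + 1) from by omega, pow_add,
                ← mul_assoc, ← mul_pow]
              norm_num
            linarith
        _ ≤ _ := Finset.sum_le_sum (fun r _ => jump_term_ge (S ++ r))
    calc (N : ℝ≥0∞) * ENNReal.ofReal c
        = ∑ _j ∈ Finset.range N, ENNReal.ofReal c := by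
          rw [Finset.sum_const, Finset.card_range, nsmul_eq_mul]
      _ ≤ _ := Finset.sum_le_sum hinner
  -- conclude
  by_contra hne
  have hlt : fracVar (1/2) (vfn theF 0) K ≠ ⊤ := hne
  obtain ⟨N, hN⟩ := exists_nat_gt ((fracVar (1/2) (vfn theF 0) K).toReal / c)
  have h1 := key N
  rw [← ENNReal.ofReal_natCast N, ← ENNReal.ofReal_mul (by positivity)] at h1
  rw [ENNReal.ofReal_le_iff_le_toReal hlt] at h1
  rw [div_lt_iff₀ hcpos] at hN
  linarith

/-! ### Baire category argument and final assembly -/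

lemma zero_mem_CC : (0:ℝ) ∈ CC := by
  have := Lx_mem_CC []
  simpa using this

lemma exists_portion {A : ℕ → Set ℝ} (hcl : ∀ m, IsClosed (A m)) (hcover : CC ⊆ ⋃ m, A m) :
    ∃ m, ∃ x ∈ CC, ∃ ε > 0, ∀ y ∈ CC, |y - x| < ε → y ∈ A m := by
  haveI : CompleteSpace CC := isClosed_CC.completeSpace_coe
  haveI : Nonempty CC := ⟨⟨0, zero_mem_CC⟩⟩
  set f : ℕ → Set CC := fun m => (Subtype.val ⁻¹' A m) with hfdef
  have hcl' : ∀ m, IsClosed (f m) := fun m => (hcl m).preimage continuous_subtype_val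
  have hun : ⋃ m, f m = Set.univ := by
    ext x
    simp only [Set.mem_iUnion, Set.mem_univ, iff_true]
    rcases Set.mem_iUnion.1 (hcover x.2) with ⟨m, hm⟩
    exact ⟨m, hm⟩
  obtain ⟨m, ⟨x, hx⟩⟩ := nonempty_interior_of_iUnion_of_closed hcl' hun
  rw [mem_interior_iff_mem_nhds] at hx
  rcases Metric.mem_nhds_iff.1 hx with ⟨ε, hε, hball⟩
  refine ⟨m, x.1, x.2, ε, hε, ?_⟩
  intro y hy hyx
  have hmem : (⟨y, hy⟩ : CC) ∈ Metric.ball x ε := by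
    rw [Metric.mem_ball, Subtype.dist_eq, Real.dist_eq]
    exact hyx
  exact hball hmem

lemma not_VBGHalf_theF : ¬ VBGHalf theF 0 1 := by
  rintro ⟨-, A, hA, hunion⟩
  have hcover : CC ⊆ ⋃ m, A m := by
    rw [← hunion]
    exact CC_subset_Kset
  obtain ⟨m, x, hxCC, ε, hε, hball⟩ := exists_portion (fun m => (hA m).1) hcover
  obtain ⟨n, hn⟩ : ∃ n : ℕ, ((3:ℝ)⁻¹) ^ n < ε := exists_pow_lt_of_lt_one hε (by norm_num)
  obtain ⟨S, hSlen, hxS⟩ := CC_approx hxCC n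
  have hK : ∀ y ∈ CC, y ∈ basic S → y ∈ A m := by
    intro y hy hyS
    apply hball y hy
    calc |y - x| ≤ ((3:ℝ)⁻¹) ^ S.length := basic_diam hyS hxS
    _ < ε := by rwa [hSlen]
  have htop := fracVar_vfn_top S (A m) hK
  have := (hA m).2.2
  rw [htop] at this
  exact lt_irrefl _ this

end Stmt12

open Stmt12

/-- There is a continuous function `f : [0,1] → ℝ` of bounded variation
which is not `VBG_{1/2}`, yet `K_f` is a countable union of closed sets `A m ⊆ K_f`
with `V_{1/2}(f, A m) < ∞` for every `m`. -/
theorem stmt12 :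
    ∃ f : ℝ → ℝ, ContinuousOn f (Set.Icc (0:ℝ) 1) ∧
      BoundedVariationOn f (Set.Icc (0:ℝ) 1) ∧
      ¬ VBGHalf f 0 1 ∧
      ∃ A : ℕ → Set ℝ,
        (∀ m, IsClosed (A m) ∧ A m ⊆ Kset f 0 1 ∧ fracVar (1/2) f (A m) < ⊤) ∧
        Kset f 0 1 = ⋃ m, A m := by
  classical
  obtain ⟨e, he⟩ := exists_surjective_nat (List Bool)
  set A : ℕ → Set ℝ := fun m => Nat.casesOn m CC (fun k => {md (e k)}) with hAdef
  refine ⟨theF, theF_continuous.continuousOn, theF_BV, not_VBGHalf_theF, A, ?_, ?_⟩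
  · intro m
    refine ⟨?_, ?_, ?_⟩
    · cases m with
      | zero => exact isClosed_CC
      | succ k => exact isClosed_singleton
    · cases m with
      | zero =>
        rw [Kset_eq]
        exact fun x hx => Or.inl hx
      | succ k =>
        rw [Kset_eq]
        intro x hx
        rw [Set.mem_singleton_iff] at hx
        exact Or.inr ⟨e k, hx⟩
    · cases m with
      | zero =>
        exact fracVar_lt_top_of_const (by norm_num)
          (fun x hx y hy => by rw [theF_eq_zero_CC hx, theF_eq_zero_CC hy])
      | succ k =>
        refine fracVar_lt_top_of_const (by norm_num) (fun x hx y hy => ?_)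
        rw [Set.mem_singleton_iff] at hx hy
        rw [hx, hy]
  · rw [Kset_eq]
    ext x
    simp only [Set.mem_union, Set.mem_iUnion]
    constructor
    · rintro (hx | ⟨s, rfl⟩)
      · exact ⟨0, hx⟩
      · obtain ⟨k, hk⟩ := he s
        refine ⟨k + 1, ?_⟩
        show md s ∈ ({md (e k)} : Set ℝ)
        rw [Set.mem_singleton_iff, hk]
    · rintro ⟨m, hm⟩
      cases m with
      | zero => exact Or.inl hm
      | succ k => exact Or.inr ⟨e k, hm⟩
end

section
/- There exists a continuous VBG_{1/2} function f:[0,1]→ℝ such that V_{1/2}(f, K_f) = ∞. (Hence VBG_{1/2} functions do not coincide with continuous functions f satisfying V_{1/2}(f,K_f)<∞, even for real-valued functions.) -/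
open Set MeasureTheory
open scoped ENNReal NNReal

open Set Metric

namespace Stmt13

/-- `aa n = 1/(n+1)`, the tooth endpoints. -/
noncomputable def aa (n : ℕ) : ℝ := ((n : ℝ) + 1)⁻¹

/-- midpoint of the tooth `[aa (n+1), aa n]`. -/
noncomputable def mid (n : ℕ) : ℝ := (aa (n + 1) + aa n) / 2

/-- The set of tooth endpoints together with `0`. -/
def SS : Set ℝ := insert 0 (Set.range aa)

/-- The sawtooth function. -/
noncomputable def ff (x : ℝ) : ℝ := Metric.infDist x SS

lemma aa_pos (n : ℕ) : 0 < aa n := by rw [aa]; positivity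

lemma aa_le_one (n : ℕ) : aa n ≤ 1 := by
  rw [aa, inv_le_one_iff₀]; right; linarith [Nat.cast_nonneg (α := ℝ) n]

lemma aa_anti {m n : ℕ} (h : m ≤ n) : aa n ≤ aa m := by
  apply inv_anti₀ (by positivity)
  have : (m : ℝ) ≤ n := Nat.cast_le.2 h
  linarith

lemma aa_strict_anti {m n : ℕ} (h : m < n) : aa n < aa m := by
  apply inv_strictAnti₀ (by positivity)
  have : (m : ℝ) < n := Nat.cast_lt.2 h
  linarith

lemma aa_zero : aa 0 = 1 := by norm_num [aa]

lemma aa_succ_lt (n : ℕ) : aa (n + 1) < aa n := aa_strict_anti (Nat.lt_succ_self n)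

lemma mid_mem (n : ℕ) : aa (n + 1) < mid n ∧ mid n < aa n := by
  have := aa_succ_lt n
  constructor <;> (rw [mid]; linarith)

lemma SS_nonempty : SS.Nonempty := ⟨0, Or.inl rfl⟩

lemma ff_lip : LipschitzWith 1 ff := lipschitz_infDist_pt SS

lemma ff_zero_of_mem {s : ℝ} (h : s ∈ SS) : ff s = 0 := infDist_zero_of_mem h

/-- Elements of `SS` avoid the open interval `(aa (n+1), aa n)`. -/
lemma SS_side {s : ℝ} (hs : s ∈ SS) (n : ℕ) : s ≤ aa (n + 1) ∨ aa n ≤ s := by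
  rcases hs with rfl | ⟨k, rfl⟩
  · exact Or.inl (aa_pos _).le
  · rcases le_or_gt k n with h | h
    · exact Or.inr (aa_anti h)
    · exact Or.inl (aa_anti h)

/-- The explicit formula for `ff` on the tooth `[aa (n+1), aa n]`. -/
lemma ff_formula {n : ℕ} {x : ℝ} (h1 : aa (n + 1) ≤ x) (h2 : x ≤ aa n) :
    ff x = min (x - aa (n + 1)) (aa n - x) := by
  apply le_antisymm
  · apply le_min
    · have : ff x ≤ dist x (aa (n+1)) :=
        infDist_le_dist_of_mem (Or.inr ⟨n+1, rfl⟩)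
      rwa [Real.dist_eq, abs_of_nonneg (by linarith)] at this
    · have : ff x ≤ dist x (aa n) := infDist_le_dist_of_mem (Or.inr ⟨n, rfl⟩)
      rwa [Real.dist_eq, abs_of_nonpos (by linarith), neg_sub] at this
  · by_contra hlt
    push_neg at hlt
    obtain ⟨y, hy, hdy⟩ := (infDist_lt_iff SS_nonempty).1 hlt
    rcases SS_side hy n with h | h
    · have : x - aa (n+1) ≤ dist x y := by
        rw [Real.dist_eq]; rw [abs_sub_comm]
        calc x - aa (n+1) ≤ x - y := by linarith
        _ ≤ |y - x| := by rw [abs_sub_comm]; exact le_abs_self _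
      exact absurd hdy (not_lt.2 (le_trans (min_le_left _ _) this))
    · have : aa n - x ≤ dist x y := by
        rw [Real.dist_eq, abs_sub_comm]
        calc aa n - x ≤ y - x := by linarith
        _ ≤ |y - x| := le_abs_self _
      exact absurd hdy (not_lt.2 (le_trans (min_le_right _ _) this))

lemma ff_left {n : ℕ} {x : ℝ} (h1 : aa (n + 1) ≤ x) (h2 : x ≤ mid n) :
    ff x = x - aa (n + 1) := by
  have h2' : x ≤ aa n := h2.trans (mid_mem n).2.le
  rw [ff_formula h1 h2', min_eq_left]
  rw [mid] at h2; linarith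

lemma ff_right {n : ℕ} {x : ℝ} (h1 : mid n ≤ x) (h2 : x ≤ aa n) :
    ff x = aa n - x := by
  have h1' : aa (n+1) ≤ x := (mid_mem n).1.le.trans h1
  rw [ff_formula h1' h2, min_eq_right]
  rw [mid] at h1; linarith

/-! ### Variation lemmas -/

lemma evar_ne_top (c d : ℝ) : eVariationOn ff (Icc c d) ≠ ⊤ := by
  rcases le_or_gt c d with h | h
  · have := ff_lip.locallyBoundedVariationOn (Icc c d) c d ⟨le_rfl, h⟩ ⟨h, le_rfl⟩
    rwa [inter_self] at this
  · rw [eVariationOn.subsingleton]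
    · exact ENNReal.zero_ne_top
    · intro x hx y hy
      exact absurd (hx.1.trans hx.2) (not_le.2 h)

lemma evar_id {c x : ℝ} (hcx : c ≤ x) :
    eVariationOn (fun t : ℝ => t) (Icc c x) = ENNReal.ofReal (x - c) := by
  apply le_antisymm
  · have h := MonotoneOn.eVariationOn_le (f := fun t : ℝ => t) (s := Icc c x)
      (fun a _ b _ hab => hab) (a := c) (b := x) ⟨le_rfl, hcx⟩ ⟨hcx, le_rfl⟩
    rwa [inter_self] at h
  · have h := eVariationOn.edist_le (fun t : ℝ => t) (s := Icc c x)
      (x := x) (y := c) ⟨hcx, le_rfl⟩ ⟨le_rfl, hcx⟩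
    rwa [edist_dist, Real.dist_eq, abs_of_nonneg (by linarith)] at h

/-- If `ff` moves at unit speed on `[c,x]` then its variation there is `x - c`. -/
lemma evar_iso {c x : ℝ} (hcx : c ≤ x)
    (h : ∀ y ∈ Icc c x, ∀ z ∈ Icc c x, |ff y - ff z| = |y - z|) :
    eVariationOn ff (Icc c x) = ENNReal.ofReal (x - c) := by
  apply le_antisymm
  · have lip : LipschitzOnWith 1 ff (Icc c x) := ff_lip.lipschitzOnWith
    have := lip.comp_eVariationOn_le (g := fun t : ℝ => t) (s := Icc c x)
      (mapsTo_id _)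
    calc eVariationOn ff (Icc c x) = eVariationOn (ff ∘ fun t => t) (Icc c x) := rfl
    _ ≤ 1 * eVariationOn (fun t : ℝ => t) (Icc c x) := by exact_mod_cast this
    _ = ENNReal.ofReal (x - c) := by rw [one_mul, evar_id hcx]
  · have hh := eVariationOn.edist_le ff (s := Icc c x) (x := x) (y := c)
      ⟨hcx, le_rfl⟩ ⟨le_rfl, hcx⟩
    rwa [edist_dist, Real.dist_eq, h x ⟨hcx, le_rfl⟩ c ⟨le_rfl, hcx⟩,
      abs_of_nonneg (by linarith)] at hh

lemma vfn_nonneg (c x : ℝ) : 0 ≤ vfn ff c x := ENNReal.toReal_nonneg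

lemma vfn_mono {c x y : ℝ} (h : x ≤ y) : vfn ff c x ≤ vfn ff c y := by
  apply ENNReal.toReal_mono (evar_ne_top c y)
  exact eVariationOn.mono ff (Icc_subset_Icc le_rfl h)

/-- Additivity of the variation function. -/
lemma vfn_add {c b x : ℝ} (hcb : c ≤ b) (hbx : b ≤ x) :
    vfn ff c x = vfn ff c b + (eVariationOn ff (Icc b x)).toReal := by
  have key := eVariationOn.Icc_add_Icc ff (s := Icc c x) hcb hbx ⟨hcb, hbx⟩
  have e1 : Icc c x ∩ Icc c b = Icc c b := by
    rw [Icc_inter_Icc, max_self, min_eq_right hbx]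
  have e2 : Icc c x ∩ Icc b x = Icc b x := by
    rw [Icc_inter_Icc, min_self, max_eq_right hcb]
  have e3 : Icc c x ∩ Icc c x = Icc c x := inter_self _
  rw [e1, e2, e3] at key
  rw [vfn, vfn, ← key, ENNReal.toReal_add (evar_ne_top _ _) (evar_ne_top _ _)]

/-! ### Kink points belong to `Kset` -/

lemma kink_mem_Kset {x0 ε σ : ℝ} (hε : 0 < ε) (h0 : 0 < x0) (h1 : x0 < 1)
    (hσ : σ = 1 ∨ σ = -1)
    (hf : ∀ u : ℝ, |u| ≤ ε → ff (x0 + u) = ff x0 + σ * |u|) :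
    x0 ∈ Kset ff 0 1 := by
  refine ⟨⟨h0.le, h1.le⟩, ?_⟩
  rintro ⟨c, d, hc, hd, hcase⟩
  set c' := max c 0 with hc'def
  set d' := min d 1 with hd'def
  have hc'x : c' < x0 := max_lt hc h0
  have hxd' : x0 < d' := lt_min hd h1
  set δ := min ε (min (x0 - c') (d' - x0)) with hδdef
  have hδ : 0 < δ := lt_min hε (lt_min (by linarith) (by linarith))
  have hδε : δ ≤ ε := min_le_left _ _
  have hδl : δ ≤ x0 - c' := le_trans (min_le_right ε _) (min_le_left _ _)
  have hδr : δ ≤ d' - x0 := le_trans (min_le_right ε _) (min_le_right _ _)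
  have hsub : ∀ u : ℝ, |u| ≤ δ → x0 + u ∈ Icc c' d' := by
    intro u hu
    have h2 := abs_le.1 hu
    exact ⟨by linarith [h2.1], by linarith [h2.2]⟩
  have hfδ : ∀ u : ℝ, |u| ≤ δ → ff (x0 + u) = ff x0 + σ * |u| :=
    fun u hu => hf u (hu.trans hδε)
  have hσ0 : σ ≠ 0 := by rcases hσ with h | h <;> rw [h] <;> norm_num
  have hσabs : |σ| = 1 := by rcases hσ with h | h <;> rw [h] <;> norm_num
  rcases hcase with hconst | hC2
  · -- constancy is impossible
    have hy := hconst x0 ⟨hc'x.le, hxd'.le⟩ (x0 + δ) (hsub δ (by rw [abs_of_pos hδ]))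
    have h2 := hfδ δ (by rw [abs_of_pos hδ])
    rw [abs_of_pos hδ] at h2
    exact (mul_ne_zero hσ0 hδ.ne') (by linarith)
  · obtain ⟨hBV, g, ⟨g', g'', hg', _⟩, hgf⟩ := hC2
    -- the variation function near x0
    have hvr : ∀ u : ℝ, 0 ≤ u → u ≤ δ → vfn ff c' (x0 + u) = vfn ff c' x0 + u := by
      intro u h0u huδ
      rw [vfn_add (le_of_lt hc'x) (by linarith : x0 ≤ x0 + u)]
      have hev : eVariationOn ff (Icc x0 (x0 + u)) = ENNReal.ofReal (x0 + u - x0) := by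
        apply evar_iso (by linarith)
        intro y hy z hz
        have key : ∀ w : ℝ, w ∈ Icc x0 (x0 + u) → ff w = ff x0 + σ * (w - x0) := by
          intro w hw
          obtain ⟨hw1, hw2⟩ := hw
          have habs : |w - x0| ≤ δ := by rw [abs_of_nonneg (by linarith)]; linarith
          have h := hfδ (w - x0) habs
          rw [abs_of_nonneg (by linarith : (0:ℝ) ≤ w - x0),
            show x0 + (w - x0) = w from by ring] at h
          exact h
        rw [key y hy, key z hz]
        have : ff x0 + σ * (y - x0) - (ff x0 + σ * (z - x0)) = σ * (y - z) := by ring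
        rw [this, abs_mul, hσabs, one_mul]
      rw [hev, ENNReal.toReal_ofReal (by linarith)]
      ring
    have hvl : ∀ u : ℝ, 0 ≤ u → u ≤ δ → vfn ff c' (x0 - u) = vfn ff c' x0 - u := by
      intro u h0u huδ
      have key := vfn_add (c := c') (b := x0 - u) (x := x0) (by linarith) (by linarith)
      have hev : eVariationOn ff (Icc (x0 - u) x0) = ENNReal.ofReal (x0 - (x0 - u)) := by
        apply evar_iso (by linarith)
        intro y hy z hz
        have key : ∀ w : ℝ, w ∈ Icc (x0 - u) x0 → ff w = ff x0 - σ * (w - x0) := by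
          intro w hw
          obtain ⟨hw1, hw2⟩ := hw
          have habs : |w - x0| ≤ δ := by rw [abs_of_nonpos (by linarith)]; linarith
          have h := hfδ (w - x0) habs
          rw [abs_of_nonpos (by linarith : w - x0 ≤ 0),
            show x0 + (w - x0) = w from by ring] at h
          rw [h]; ring
        rw [key y hy, key z hz]
        have : ff x0 - σ * (y - x0) - (ff x0 - σ * (z - x0)) = -(σ * (y - z)) := by ring
        rw [this, abs_neg, abs_mul, hσabs, one_mul]
      rw [hev, ENNReal.toReal_ofReal (by linarith)] at key
      linarith
    set s0 := vfn ff c' x0 with hs0def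
    set V := vfn ff c' d' with hVdef
    have hs0V : s0 ≤ V := vfn_mono hxd'.le
    have hs0δ : 0 ≤ s0 - δ := by
      have h2 := hvl δ hδ.le le_rfl
      have h3 := vfn_nonneg c' (x0 - δ)
      linarith
    have hsV : s0 + δ ≤ V := by
      have h2 := hvr δ hδ.le le_rfl
      have h3 := vfn_mono (c := c') (show x0 + δ ≤ d' by linarith)
      linarith
    have hgs : ∀ s ∈ Icc (s0 - δ) (s0 + δ), g s = ff x0 + σ * |s - s0| := by
      intro s hs
      have habs : |s - s0| ≤ δ := abs_le.2 ⟨by linarith [hs.1], by linarith [hs.2]⟩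
      have hx : x0 + (s - s0) ∈ Icc c' d' := hsub _ habs
      have hv : vfn ff c' (x0 + (s - s0)) = s := by
        rcases le_total s0 s with h | h
        · rw [hvr (s - s0) (by linarith) ((abs_le.1 habs).2)]; ring
        · have he : x0 + (s - s0) = x0 - (s0 - s) := by ring
          rw [he, hvl (s0 - s) (by linarith) (by
            have := (abs_le.1 habs).1; linarith)]
          ring
      calc g s = g (vfn ff c' (x0 + (s - s0))) := by rw [hv]
      _ = ff (x0 + (s - s0)) := hgf _ hx
      _ = ff x0 + σ * |s - s0| := hfδ _ habs
    have hs0mem : s0 ∈ Icc 0 V := ⟨by linarith, hs0V⟩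
    have hder := hg' s0 hs0mem
    have hsubR : Icc s0 (s0 + δ) ⊆ Icc 0 V := Icc_subset_Icc (by linarith) hsV
    have hsubL : Icc (s0 - δ) s0 ⊆ Icc 0 V := Icc_subset_Icc (by linarith) (by linarith)
    have haffR : HasDerivWithinAt (fun s => ff x0 + σ * (s - s0)) σ (Icc s0 (s0 + δ)) s0 := by
      have h := (((hasDerivWithinAt_id s0 (Icc s0 (s0 + δ))).sub_const s0).const_mul
        σ).const_add (ff x0)
      simpa using h
    have haffL : HasDerivWithinAt (fun s => ff x0 - σ * (s - s0)) (-σ)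
        (Icc (s0 - δ) s0) s0 := by
      have h := (((hasDerivWithinAt_id s0 (Icc (s0 - δ) s0)).sub_const s0).const_mul
        σ).const_sub (ff x0)
      simpa using h
    have hR : g' s0 = σ := by
      have h1 : HasDerivWithinAt g (g' s0) (Icc s0 (s0 + δ)) s0 := hder.mono hsubR
      have h2 : HasDerivWithinAt (fun s => ff x0 + σ * (s - s0)) (g' s0)
          (Icc s0 (s0 + δ)) s0 := by
        apply h1.congr
        · intro y hy
          rw [hgs y ⟨by linarith [hy.1], hy.2⟩, abs_of_nonneg (by linarith [hy.1])]
        · rw [hgs s0 ⟨by linarith, by linarith⟩]; simp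
      exact UniqueDiffWithinAt.eq_deriv _
        ((uniqueDiffOn_Icc (by linarith : s0 < s0 + δ)) s0 ⟨le_rfl, by linarith⟩) h2 haffR
    have hL : g' s0 = -σ := by
      have h1 : HasDerivWithinAt g (g' s0) (Icc (s0 - δ) s0) s0 := hder.mono hsubL
      have h2 : HasDerivWithinAt (fun s => ff x0 - σ * (s - s0)) (g' s0)
          (Icc (s0 - δ) s0) s0 := by
        apply h1.congr
        · intro y hy
          rw [hgs y ⟨hy.1, by linarith [hy.2]⟩, abs_of_nonpos (by linarith [hy.2])]
          ring
        · rw [hgs s0 ⟨by linarith, by linarith⟩]; simp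
      exact UniqueDiffWithinAt.eq_deriv _
        ((uniqueDiffOn_Icc (by linarith : s0 - δ < s0)) s0 ⟨by linarith, le_rfl⟩) h2 haffL
    rw [hR] at hL
    rcases hσ with h | h <;> rw [h] at hL <;> norm_num at hL

/-- Peaks are in `Kset`. -/
lemma peak_mem (n : ℕ) : mid n ∈ Kset ff 0 1 := by
  have hm := mid_mem n
  have hε : (0:ℝ) < (aa n - aa (n + 1)) / 2 := by linarith [aa_succ_lt n]
  have hmid : mid n - aa (n + 1) = (aa n - aa (n + 1)) / 2 := by rw [mid]; ring
  have hmid2 : aa n - mid n = (aa n - aa (n + 1)) / 2 := by rw [mid]; ring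
  apply kink_mem_Kset hε (by linarith [aa_pos (n+1)]) (by linarith [aa_le_one n])
    (Or.inr rfl)
  intro u hu
  obtain ⟨hu1, hu2⟩ := abs_le.1 hu
  have hffm : ff (mid n) = (aa n - aa (n + 1)) / 2 := by
    rw [ff_left (mid_mem n).1.le le_rfl, hmid]
  rcases le_total u 0 with h | h
  · rw [abs_of_nonpos h]
    rw [ff_left (by linarith) (by linarith : mid n + u ≤ mid n), hffm]
    linarith
  · rw [abs_of_nonneg h]
    rw [ff_right (by linarith : mid n ≤ mid n + u) (by linarith), hffm]
    linarith

/-- Valleys are in `Kset`. -/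
lemma valley_mem (n : ℕ) : aa (n + 1) ∈ Kset ff 0 1 := by
  have h1 := mid_mem n
  have h2 := mid_mem (n + 1)
  set ε := min ((aa n - aa (n + 1)) / 2) ((aa (n + 1) - aa (n + 2)) / 2) with hεdef
  have hε : 0 < ε := by
    apply lt_min
    · linarith [aa_succ_lt n]
    · linarith [aa_succ_lt (n + 1)]
  have ha1 : aa (n + 1) < 1 := lt_of_lt_of_le (aa_succ_lt n) (aa_le_one n)
  apply kink_mem_Kset hε (aa_pos (n + 1)) ha1 (Or.inl rfl)
  intro u hu
  obtain ⟨hu1, hu2⟩ := abs_le.1 hu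
  have he1 : ε ≤ (aa n - aa (n + 1)) / 2 := min_le_left _ _
  have he2 : ε ≤ (aa (n + 1) - aa (n + 2)) / 2 := min_le_right _ _
  have hff0 : ff (aa (n + 1)) = 0 := ff_zero_of_mem (Or.inr ⟨n + 1, rfl⟩)
  have hmid : mid n = aa (n+1) + (aa n - aa (n + 1)) / 2 := by rw [mid]; ring
  have hmid2 : mid (n+1) = aa (n+1) - (aa (n + 1) - aa (n + 2)) / 2 := by rw [mid]; ring
  rcases le_total u 0 with h | h
  · rw [abs_of_nonpos h]
    rw [ff_right (n := n + 1) (by rw [hmid2]; linarith) (by linarith), hff0]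
    linarith
  · rw [abs_of_nonneg h]
    rw [ff_left (n := n) (by linarith) (by rw [hmid]; linarith), hff0]
    linarith

/-- On an interval where `ff` is affine with slope `±1`, it has a C² arc-length
parametrization. -/
lemma affine_c2 {c d e σ : ℝ} (hcd : c < d) (hσ : σ = 1 ∨ σ = -1)
    (hf : ∀ y ∈ Icc c d, ff y = e + σ * y) : HasC2ArcLengthParam ff c d := by
  have hσabs : |σ| = 1 := by rcases hσ with h | h <;> rw [h] <;> norm_num
  have hiso : ∀ y ∈ Icc c d, ∀ z ∈ Icc c d, |ff y - ff z| = |y - z| := by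
    intro y hy z hz
    rw [hf y hy, hf z hz, show e + σ * y - (e + σ * z) = σ * (y - z) from by ring,
      abs_mul, hσabs, one_mul]
  have hvfn : ∀ x ∈ Icc c d, vfn ff c x = x - c := by
    intro x hx
    rw [vfn, evar_iso hx.1 (fun y hy z hz => hiso y ⟨hy.1, hy.2.trans hx.2⟩
      z ⟨hz.1, hz.2.trans hx.2⟩), ENNReal.toReal_ofReal (by linarith [hx.1])]
  constructor
  · have h := ff_lip.locallyBoundedVariationOn (Icc c d) c d ⟨le_rfl, hcd.le⟩
      ⟨hcd.le, le_rfl⟩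
    rwa [inter_self] at h
  · refine ⟨fun t => ff c + σ * t, ⟨fun _ => σ, fun _ => 0, ?_, ?_⟩, ?_⟩
    · intro x hx
      have h := ((hasDerivWithinAt_id x (Icc 0 (vfn ff c d))).const_mul σ).const_add
        (ff c)
      simpa using h
    · intro x hx
      exact hasDerivWithinAt_const _ _ _
    · intro x hx
      rw [hvfn x hx, hf x hx, hf c ⟨le_rfl, hcd.le⟩]
      ring

/-- The countable set of potential points of varying monotonicity. -/
noncomputable def bpt : ℕ → ℝ := fun m =>
  match m with
  | 0 => 0
  | (k + 1) => if k % 2 = 0 then aa (k / 2) else mid (k / 2)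

lemma kset_subset : Kset ff 0 1 ⊆ {x | ∃ m, x = bpt m} := by
  intro x hx
  by_contra hC
  simp only [mem_setOf_eq, not_exists] at hC
  have hx0 : x ≠ 0 := fun h => hC 0 h
  have hxa : ∀ k, x ≠ aa k := by
    intro k h
    exact hC (2 * k + 1) (by simp [bpt, Nat.mul_div_cancel_left, h])
  have hxm : ∀ k, x ≠ mid k := by
    intro k h
    refine hC (2 * k + 2) ?_
    have : (2 * k + 1) % 2 = 1 := by omega
    simp only [bpt, this]
    norm_num
    rw [show (2 * k + 1) / 2 = k from by omega]
    exact h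
  obtain ⟨⟨hx1, hx2⟩, hk⟩ := hx
  have hx1' : 0 < x := lt_of_le_of_ne hx1 (Ne.symm hx0)
  -- find the tooth containing x
  have hex : ∃ k, aa k < x := by
    obtain ⟨k, hk'⟩ := exists_nat_gt (1 / x)
    refine ⟨k, ?_⟩
    rw [aa]
    rw [inv_lt_iff_one_lt_mul₀ (by positivity)]
    have h1x : 1 / x < (k : ℝ) + 1 := by linarith
    calc (1:ℝ) = (1 / x) * x := by field_simp
    _ < ((k:ℝ) + 1) * x := by
        apply mul_lt_mul_of_pos_right h1x hx1'
    _ = x * ((k:ℝ) + 1) := by ring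
  classical
  have hNspec : aa (Nat.find hex) < x := Nat.find_spec hex
  have hN0 : Nat.find hex ≠ 0 := by
    intro h
    rw [h, aa_zero] at hNspec
    linarith
  obtain ⟨n, hn⟩ := Nat.exists_eq_succ_of_ne_zero hN0
  have hlt : aa (n + 1) < x := by rw [← Nat.succ_eq_add_one, ← hn]; exact hNspec
  have hmin : ¬ aa n < x := Nat.find_min hex (by omega)
  push_neg at hmin
  have hlt2 : x < aa n := lt_of_le_of_ne hmin (hxa n)
  apply hk
  rcases lt_trichotomy x (mid n) with hcase | hcase | hcase
  · -- left half of the tooth, slope +1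
    refine ⟨(aa (n + 1) + x) / 2, (x + mid n) / 2, by linarith, by linarith, Or.inr ?_⟩
    have hc0 : (0:ℝ) < (aa (n + 1) + x) / 2 := by linarith [aa_pos (n + 1)]
    have hd1 : (x + mid n) / 2 < 1 := by
      have := (mid_mem n).2
      have := aa_le_one n
      linarith
    rw [max_eq_left hc0.le, min_eq_left hd1.le]
    apply affine_c2 (e := -aa (n + 1)) (by linarith) (Or.inl rfl)
    intro y hy
    obtain ⟨hy1, hy2⟩ := hy
    rw [ff_left (by linarith) (by linarith)]
    ring
  · exact absurd hcase (hxm n)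
  · -- right half of the tooth, slope -1
    refine ⟨(mid n + x) / 2, (x + aa n) / 2, by linarith, by linarith, Or.inr ?_⟩
    have hc0 : (0:ℝ) < (mid n + x) / 2 := by
      have := (mid_mem n).1
      have := aa_pos (n + 1)
      linarith
    have hd1 : (x + aa n) / 2 < 1 := by
      have := aa_le_one n
      linarith
    rw [max_eq_left hc0.le, min_eq_left hd1.le]
    apply affine_c2 (e := aa n) (by linarith) (Or.inr rfl)
    intro y hy
    obtain ⟨hy1, hy2⟩ := hy
    rw [ff_right (by linarith) (by linarith)]
    ring

/-! ### fracVar computations -/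

lemma fracVar_subsingleton (g : ℝ → ℝ) {K : Set ℝ} (hK : K.Subsingleton) :
    fracVar (1/2) g K = 0 := by
  rw [fracVar]
  apply le_antisymm _ zero_le
  refine iSup_le fun m => iSup_le fun p => iSup_le fun h1 => iSup_le fun _ => ?_
  apply le_of_eq
  apply Finset.sum_eq_zero
  intro i _
  have he : (p i).1 = (p i).2 := hK (h1 i).1 (h1 i).2.1
  rw [he, sub_self, abs_zero, Real.zero_rpow (by norm_num : (1/2:ℝ) ≠ 0),
    ENNReal.ofReal_zero]

/-- tooth-indexed lower bound terms -/
noncomputable def F (k : ℕ) : ℝ≥0∞ := ENNReal.ofReal (1 / (2 * ((k:ℝ) + 2)))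

lemma term_bound (n : ℕ) :
    F n ≤ ENNReal.ofReal (|ff (mid n) - ff (aa (n + 1))| ^ ((1:ℝ)/2)) := by
  apply ENNReal.ofReal_le_ofReal
  have hpos := aa_succ_lt n
  have hffm : ff (mid n) = mid n - aa (n + 1) := ff_left (mid_mem n).1.le le_rfl
  have hff0 : ff (aa (n + 1)) = 0 := ff_zero_of_mem (Or.inr ⟨n + 1, rfl⟩)
  rw [hffm, hff0, sub_zero, abs_of_nonneg (by linarith [(mid_mem n).1])]
  have hval : mid n - aa (n + 1) = 1 / (2 * ((n:ℝ) + 1 + 1) * ((n:ℝ) + 1)) := by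
    rw [mid, aa, aa]
    push_cast
    field_simp
    ring
  rw [hval]
  have hb : (1 / (2 * ((n:ℝ) + 2))) ^ (2:ℕ) ≤ 1 / (2 * ((n:ℝ) + 1 + 1) * ((n:ℝ) + 1)) := by
    rw [div_pow, one_pow, div_le_div_iff₀ (by positivity) (by positivity)]
    have hn : (0:ℝ) ≤ (n:ℝ) := Nat.cast_nonneg n
    nlinarith
  calc 1 / (2 * ((n:ℝ) + 2))
      = ((1 / (2 * ((n:ℝ) + 2))) ^ (2:ℕ)) ^ ((1:ℝ)/2) := by
        rw [← Real.rpow_natCast _ 2, ← Real.rpow_mul (by positivity)]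
        norm_num
  _ ≤ (1 / (2 * ((n:ℝ) + 1 + 1) * ((n:ℝ) + 1))) ^ ((1:ℝ)/2) :=
        Real.rpow_le_rpow (by positivity) hb (by norm_num)

lemma harmonic_div : ∑' (i : ℕ), F (i + 1) = ⊤ := by
  by_contra h
  have h2 : Summable (fun i : ℕ => Real.toNNReal (1 / (2 * (((i + 1 : ℕ):ℝ) + 2)))) := by
    rw [← ENNReal.tsum_coe_ne_top_iff_summable]
    exact h
  have h3 : Summable (fun i : ℕ => 1 / (2 * ((i:ℝ) + 3))) := by
    have h' := NNReal.summable_coe.2 h2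
    refine h'.congr fun i => ?_
    rw [Real.coe_toNNReal _ (by positivity)]
    push_cast
    ring_nf
  have h4 : Summable (fun i : ℕ => 1 / ((i:ℝ) + 3)) := by
    have h' := h3.mul_left 2
    refine h'.congr fun i => ?_
    field_simp
  have h4' : Summable (fun i : ℕ => 1 / (((i + 3 : ℕ)):ℝ)) :=
    h4.congr fun i => by push_cast; ring
  exact Real.not_summable_one_div_natCast ((summable_nat_add_iff 3).1 h4')

lemma fracVar_top : fracVar (1/2) ff (Kset ff 0 1) = ⊤ := by
  apply top_unique
  rw [← harmonic_div, ENNReal.tsum_eq_iSup_nat]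
  apply iSup_le
  intro m
  set p : Fin m → ℝ × ℝ := fun i => (aa (m - (i : ℕ) + 1), mid (m - (i : ℕ))) with hp
  have h1 : ∀ i, (p i).1 ∈ Kset ff 0 1 ∧ (p i).2 ∈ Kset ff 0 1 ∧ (p i).1 ≤ (p i).2 :=
    fun i => ⟨valley_mem _, peak_mem _, (mid_mem _).1.le⟩
  have h2 : ∀ i j : Fin m, i < j → (p i).2 ≤ (p j).1 := by
    intro i j hij
    have hij' : (i : ℕ) < (j : ℕ) := hij
    have hj : (j : ℕ) < m := j.2
    have hle : m - (j : ℕ) + 1 ≤ m - (i : ℕ) := by omega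
    calc (p i).2 = mid (m - (i:ℕ)) := rfl
    _ ≤ aa (m - (i:ℕ)) := (mid_mem _).2.le
    _ ≤ aa (m - (j:ℕ) + 1) := aa_anti hle
    _ = (p j).1 := rfl
  have hsum : ∑ a ∈ Finset.range m, F (a + 1)
      ≤ ∑ i : Fin m, ENNReal.ofReal (|ff (p i).2 - ff (p i).1| ^ ((1:ℝ)/2)) := by
    have hrefl := Finset.sum_range_reflect (fun a => F (a + 1)) m
    rw [← hrefl, ← Fin.sum_univ_eq_sum_range (fun a => F (m - 1 - a + 1))]
    apply Finset.sum_le_sum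
    intro i _
    have hieq : m - 1 - (i:ℕ) + 1 = m - (i:ℕ) := by omega
    rw [hieq]
    exact term_bound (m - (i:ℕ))
  refine hsum.trans ?_
  rw [fracVar]
  refine le_iSup_of_le m ?_
  refine le_iSup_of_le p ?_
  refine le_iSup_of_le h1 ?_
  refine le_iSup_of_le h2 ?_
  exact le_of_eq (by norm_num)

end Stmt13

/-- There is a continuous `VBG_{1/2}` function `f : [0,1] → ℝ` with
`V_{1/2}(f, K_f) = ∞`. -/
theorem stmt13 :
    ∃ f : ℝ → ℝ, ContinuousOn f (Set.Icc (0:ℝ) 1) ∧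
      VBGHalf f 0 1 ∧ fracVar (1/2) f (Kset f 0 1) = ⊤ := by
  refine ⟨Stmt13.ff, Stmt13.ff_lip.continuous.continuousOn, ⟨?_, ?_⟩, Stmt13.fracVar_top⟩
  · exact Stmt13.evar_ne_top 0 1
  · refine ⟨fun m => Kset Stmt13.ff 0 1 ∩ {Stmt13.bpt m}, fun m => ⟨?_, ?_, ?_⟩, ?_⟩
    · exact (Set.Finite.inter_of_right (Set.finite_singleton _) _).isClosed
    · exact fun x hx => hx.1.1
    · have hsub : (Kset Stmt13.ff 0 1 ∩ {Stmt13.bpt m}).Subsingleton := fun x hx y hy =>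
        (Set.mem_singleton_iff.1 hx.2).trans (Set.mem_singleton_iff.1 hy.2).symm
      rw [Stmt13.fracVar_subsingleton _ hsub]
      exact ENNReal.zero_lt_top
    · ext x
      simp only [Set.mem_iUnion, Set.mem_inter_iff, Set.mem_singleton_iff]
      constructor
      · intro hx
        obtain ⟨m, hm⟩ := Stmt13.kset_subset hx
        exact ⟨m, hx, hm⟩
      · rintro ⟨m, hm, -⟩
        exact hm
end
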